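/- arXiv:0705.0167 — 3 statements merged into one kernel-verified Lean document; each statement's English description precedes it below -/
import Mathlib

section
/- With the Q-polynomial distance-regular graph setup, let W be an irreducible T-module. Then the diameter of W equals the dual diameter of W, i.e. |{i : 0 ≤ i ≤ D, E*_iW ≠ 0}| = |{i : 0 ≤ i ≤ D, E_iW ≠ 0}|. -/
noncomputable section

open Matrix Finset
open scoped ComplexInnerProductSpace

/-- A `Q`-polynomial distance-regular graph setup: a finite connected simple graph `G` on `X`
with diameter `D ≥ 3`, intersection numbers `p h i j`, primitive idempotents
`E 0, …, E D` of the Bose–Mesner algebra with (distinct, real) eigenvalues `θ 0, …, θ D`,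
and Krein parameters `q h i j` satisfying the `Q`-polynomial condition with respect to the
ordering `E 0, …, E D`. -/
structure QPolyDRG (X : Type*) [Fintype X] [DecidableEq X] where
  G : SimpleGraph X
  conn : G.Connected
  D : ℕ
  hD3 : 3 ≤ D
  dist_le : ∀ y z : X, G.dist y z ≤ D
  dist_eq : ∃ y z : X, G.dist y z = D
  p : ℕ → ℕ → ℕ → ℕ
  hp : ∀ h i j : ℕ, h ≤ D → i ≤ D → j ≤ D → ∀ y z : X, G.dist y z = h →
    Nat.card {w : X // G.dist y w = i ∧ G.dist w z = j} = p h i j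
  E : ℕ → Matrix X X ℂ
  θ : ℕ → ℝ
  q : ℕ → ℕ → ℕ → ℝ
  hE0 : E 0 = ((Fintype.card X : ℂ))⁻¹ • Matrix.of (fun _ _ => (1 : ℂ))
  hEsum : ∑ i ∈ Finset.range (D + 1), E i = 1
  hEmul : ∀ i ≤ D, ∀ j ≤ D, E i * E j = if i = j then E i else 0
  hEsym : ∀ i ≤ D, (E i)ᵀ = E i
  hEreal : ∀ i ≤ D, ∀ y z : X, ((E i) y z).im = 0
  hEinM : ∀ i ≤ D, E i ∈ Submodule.span ℂ
    {B : Matrix X X ℂ | ∃ k ≤ D, B = Matrix.of (fun y z => if G.dist y z = k then (1 : ℂ) else 0)}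
  hAE : ∀ i ≤ D,
    Matrix.of (fun y z => if G.dist y z = 1 then (1 : ℂ) else 0) * E i = (θ i : ℂ) • E i
  θ_inj : ∀ i ≤ D, ∀ j ≤ D, θ i = θ j → i = j
  hKrein : ∀ i ≤ D, ∀ j ≤ D, Matrix.hadamard (E i) (E j) =
    ((Fintype.card X : ℂ))⁻¹ • ∑ h ∈ Finset.range (D + 1), (q h i j : ℂ) • E h
  hq_zero : ∀ h ≤ D, ∀ i ≤ D, ∀ j ≤ D, (i + j < h ∨ h + j < i ∨ h + i < j) → q h i j = 0
  hq_ne : ∀ h ≤ D, ∀ i ≤ D, ∀ j ≤ D, (h = i + j ∨ i = h + j ∨ j = h + i) → q h i j ≠ 0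

namespace QPolyDRG

variable {X : Type*} [Fintype X] [DecidableEq X] (S : QPolyDRG X) (x : X)

/-- The `i`-th distance matrix `A_i`. -/
def Amat (i : ℕ) : Matrix X X ℂ :=
  Matrix.of (fun y z => if S.G.dist y z = i then (1 : ℂ) else 0)

/-- The adjacency matrix `A = A_1`. -/
def adj : Matrix X X ℂ := S.Amat 1

/-- The `i`-th dual idempotent `E*_i = E*_i(x)` with respect to the base vertex `x`. -/
def Estar (i : ℕ) : Matrix X X ℂ :=
  Matrix.diagonal (fun y => if S.G.dist x y = i then (1 : ℂ) else 0)

/-- The dual adjacency matrix `A* = A*(x)`, with `(A*)_{yy} = |X| (E_1)_{xy}`. -/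
def Astar : Matrix X X ℂ :=
  Matrix.diagonal (fun y => (Fintype.card X : ℂ) * S.E 1 x y)

/-- The subspace `E_i V` of the standard module, with the convention that it is `0`
for `i ∉ {0, …, D}`. -/
def EV (i : ℤ) : Submodule ℂ (EuclideanSpace ℂ X) :=
  if 0 ≤ i ∧ i ≤ S.D then LinearMap.range (Matrix.toEuclideanLin (S.E i.toNat)) else ⊥

/-- The `i`-th subconstituent `E*_i V` with respect to `x`, with the convention that it is `0`
for `i ∉ {0, …, D}`. -/
def EstarV (i : ℤ) : Submodule ℂ (EuclideanSpace ℂ X) :=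
  if 0 ≤ i ∧ i ≤ S.D then LinearMap.range (Matrix.toEuclideanLin (S.Estar x i.toNat)) else ⊥

/-- The subconstituent (Terwilliger) algebra `T = T(x)`, generated by `A` and `A*`. -/
def Talg : Subalgebra ℂ (Matrix X X ℂ) := Algebra.adjoin ℂ {S.adj, S.Astar x}

/-- A `T`-module: a subspace `W ⊆ V` with `B W ⊆ W` for all `B ∈ T`. -/
def IsTModule (W : Submodule ℂ (EuclideanSpace ℂ X)) : Prop :=
  ∀ B ∈ S.Talg x, ∀ w ∈ W, Matrix.toEuclideanLin B w ∈ W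

/-- An irreducible `T`-module. -/
def IsIrredTModule (W : Submodule ℂ (EuclideanSpace ℂ X)) : Prop :=
  S.IsTModule x W ∧ W ≠ ⊥ ∧ ∀ W' ≤ W, S.IsTModule x W' → W' = ⊥ ∨ W' = W

/-- The subspace `E_i W`, with the convention that it is `0` for `i ∉ {0, …, D}`. -/
def EW (W : Submodule ℂ (EuclideanSpace ℂ X)) (i : ℤ) : Submodule ℂ (EuclideanSpace ℂ X) :=
  if 0 ≤ i ∧ i ≤ S.D then Submodule.map (Matrix.toEuclideanLin (S.E i.toNat)) W else ⊥

/-- The subspace `E*_i W`, with the convention that it is `0` for `i ∉ {0, …, D}`. -/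
def EstarW (W : Submodule ℂ (EuclideanSpace ℂ X)) (i : ℤ) : Submodule ℂ (EuclideanSpace ℂ X) :=
  if 0 ≤ i ∧ i ≤ S.D then Submodule.map (Matrix.toEuclideanLin (S.Estar x i.toNat)) W else ⊥


/-- The endpoint `ρ = min { i : E*_i W ≠ 0 }` of a `T`-module `W`. -/
def endpt (W : Submodule ℂ (EuclideanSpace ℂ X)) : ℕ :=
  sInf {i : ℕ | i ≤ S.D ∧ S.EstarW x W i ≠ ⊥}

/-- The dual endpoint `τ = min { i : E_i W ≠ 0 }` of a `T`-module `W`. -/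
def dualEndpt (W : Submodule ℂ (EuclideanSpace ℂ X)) : ℕ :=
  sInf {i : ℕ | i ≤ S.D ∧ S.EW W i ≠ ⊥}

/-- The diameter `d = |{ i : E*_i W ≠ 0 }| - 1` of a `T`-module `W`. -/
def diam (W : Submodule ℂ (EuclideanSpace ℂ X)) : ℕ :=
  Set.ncard {i : ℕ | i ≤ S.D ∧ S.EstarW x W i ≠ ⊥} - 1

/-- The dual diameter `|{ i : E_i W ≠ 0 }| - 1` of a `T`-module `W`. -/
def dualDiam (W : Submodule ℂ (EuclideanSpace ℂ X)) : ℕ :=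
  Set.ncard {i : ℕ | i ≤ S.D ∧ S.EW W i ≠ ⊥} - 1

/-- The split subspace `W^{μν}_h` of an irreducible `T`-module `W` with endpoint `ρ`,
dual endpoint `τ` and diameter `d`.  Here `μ = false` stands for `↓` and `μ = true`
for `↑`, and similarly for `ν`; e.g.
`W^{↓↓}_h = (E*_ρ W + ⋯ + E*_{ρ+h} W) ∩ (E_τ W + ⋯ + E_{τ+d-h} W)`. -/
def Wsplit (W : Submodule ℂ (EuclideanSpace ℂ X)) (ρ τ d : ℕ) (μ ν : Bool) (h : ℕ) :
    Submodule ℂ (EuclideanSpace ℂ X) :=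
  (if μ then ⨆ k ∈ Finset.Icc (ρ + d - h) (ρ + d), S.EstarW x W k
    else ⨆ k ∈ Finset.Icc ρ (ρ + h), S.EstarW x W k) ⊓
  (if ν then ⨆ k ∈ Finset.Icc (τ + h) (τ + d), S.EW W k
    else ⨆ k ∈ Finset.Icc τ (τ + d - h), S.EW W k)

/-- The subspace `V^{μν}_{i,j}` (interpreted as `0` if `i = -1` or `j = -1`).
Here `μ = false` stands for `↓` and `μ = true` for `↑`, and similarly for `ν`; e.g.
`V^{↓↓}_{i,j} = (E*_0 V + ⋯ + E*_i V) ∩ (E_0 V + ⋯ + E_j V)` and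
`V^{↑↑}_{i,j} = (E*_D V + ⋯ + E*_{D-i} V) ∩ (E_D V + ⋯ + E_{D-j} V)`. -/
def Vsplit (μ ν : Bool) (i j : ℤ) : Submodule ℂ (EuclideanSpace ℂ X) :=
  if 0 ≤ i ∧ 0 ≤ j then
    (if μ then ⨆ k ∈ Finset.Icc (S.D - i.toNat) S.D, S.EstarV x k
      else ⨆ k ∈ Finset.range (i.toNat + 1), S.EstarV x k) ⊓
    (if ν then ⨆ k ∈ Finset.Icc (S.D - j.toNat) S.D, S.EV k
      else ⨆ k ∈ Finset.range (j.toNat + 1), S.EV k)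
  else ⊥

/-- The subspace `Ṽ^{μν}_{i,j}`: the orthogonal complement of
`V^{μν}_{i-1,j} + V^{μν}_{i,j-1}` in `V^{μν}_{i,j}` with respect to the standard
Hermitian form. -/
def tildeV (μ ν : Bool) (i j : ℕ) : Submodule ℂ (EuclideanSpace ℂ X) :=
  S.Vsplit x μ ν i j ⊓ (S.Vsplit x μ ν ((i : ℤ) - 1) j ⊔ S.Vsplit x μ ν i ((j : ℤ) - 1))ᗮ

-- ## auxiliary development

include S in
lemma aux_nonempty : Nonempty X := by
  exact S.conn.nonempty

include S in
lemma aux_cardX_ne : (Fintype.card X : ℂ) ≠ 0 := by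
  have h := S.aux_nonempty
  have : Fintype.card X ≠ 0 := Fintype.card_ne_zero
  exact_mod_cast this

lemma aux_sum_mulVec {ι : Type*} (s : Finset ι) (M : ι → Matrix X X ℂ) (c : X → ℂ) :
    (∑ g ∈ s, M g) *ᵥ c = ∑ g ∈ s, M g *ᵥ c := by
  ext y
  simp only [Matrix.mulVec, dotProduct, Finset.sum_apply, Finset.sum_mul, Matrix.sum_apply]
  rw [Finset.sum_comm]

lemma aux_E_entry_real (i : ℕ) (hi : i ≤ S.D) (y z : X) :
    (starRingEnd ℂ) (S.E i y z) = S.E i y z :=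
  Complex.conj_eq_iff_im.mpr (S.hEreal i hi y z)

lemma aux_E_symm (i : ℕ) (hi : i ≤ S.D) (y z : X) : S.E i y z = S.E i z y := by
  conv_lhs => rw [← S.hEsym i hi]
  rfl

lemma aux_E_conjTranspose (i : ℕ) (hi : i ≤ S.D) : (S.E i)ᴴ = S.E i := by
  ext y z
  simp only [conjTranspose_apply]
  rw [← aux_E_symm S i hi, RCLike.star_def, aux_E_entry_real S i hi]

lemma aux_trace_mul_conjTranspose_self_eq_zero (M : Matrix X X ℂ) :
    Matrix.trace (M * Mᴴ) = 0 ↔ M = 0 := by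
  have h : Matrix.trace (M * Mᴴ) = ((∑ u : X, ∑ w : X, Complex.normSq (M u w) : ℝ) : ℂ) := by
    simp only [Matrix.trace, Matrix.diag, Matrix.mul_apply, conjTranspose_apply]
    push_cast
    refine Finset.sum_congr rfl fun u _ => Finset.sum_congr rfl fun w _ => ?_
    rw [RCLike.star_def, Complex.mul_conj]
  rw [h]
  constructor
  · intro h0
    have h1 : (∑ u : X, ∑ w : X, Complex.normSq (M u w) : ℝ) = 0 := by exact_mod_cast h0
    have h2 : ∀ u ∈ Finset.univ (α := X), ∀ w ∈ Finset.univ (α := X),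
        Complex.normSq (M u w) = 0 := by
      have := (Finset.sum_eq_zero_iff_of_nonneg (fun u _ =>
        Finset.sum_nonneg fun w _ => Complex.normSq_nonneg _)).mp h1
      intro u hu w hw
      exact (Finset.sum_eq_zero_iff_of_nonneg fun w _ => Complex.normSq_nonneg _).mp
        (this u hu) w hw
    ext u w
    simpa using Complex.normSq_eq_zero.mp (h2 u (by simp) w (by simp))
  · intro h0; simp [h0]

/-- The key Krein-parameter trace identity. -/
lemma aux_KI (i j h : ℕ) (hi : i ≤ S.D) (hj : j ≤ S.D) (hh : h ≤ S.D) (v : X → ℂ) :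
    Matrix.trace ((S.E i * Matrix.diagonal (S.E h *ᵥ v) * S.E j) *
      (S.E i * Matrix.diagonal (S.E h *ᵥ v) * S.E j)ᴴ)
    = (Fintype.card X : ℂ)⁻¹ * (S.q h i j : ℂ) * (star (S.E h *ᵥ v) ⬝ᵥ (S.E h *ᵥ v)) := by
  set c : X → ℂ := S.E h *ᵥ v with hc
  have hMH : (S.E i * Matrix.diagonal c * S.E j)ᴴ = S.E j * Matrix.diagonal (star c) * S.E i := by
    simp only [conjTranspose_mul, diagonal_conjTranspose, aux_E_conjTranspose S i hi,
      aux_E_conjTranspose S j hj, Matrix.mul_assoc]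
  rw [hMH]
  have hEj : S.E j * S.E j = S.E j := by simpa using S.hEmul j hj j hj
  have hEi : S.E i * S.E i = S.E i := by simpa using S.hEmul i hi i hi
  have key : (S.E i * Matrix.diagonal c * S.E j) * (S.E j * Matrix.diagonal (star c) * S.E i)
      = S.E i * (Matrix.diagonal c * (S.E j * Matrix.diagonal (star c))) * S.E i := by
    rw [show (S.E i * Matrix.diagonal c * S.E j) * (S.E j * Matrix.diagonal (star c) * S.E i)
      = S.E i * Matrix.diagonal c * (S.E j * S.E j) * Matrix.diagonal (star c) * S.E i by
        simp only [Matrix.mul_assoc], hEj]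
    simp only [Matrix.mul_assoc]
  rw [key, Matrix.trace_mul_comm, show S.E i * (S.E i * (Matrix.diagonal c * (S.E j *
      Matrix.diagonal (star c)))) = (S.E i * S.E i) * (Matrix.diagonal c * (S.E j *
      Matrix.diagonal (star c))) by simp only [Matrix.mul_assoc], hEi]
  -- now trace (E i * (diagonal c * (E j * diagonal (star c))))
  have lhs_eq : Matrix.trace (S.E i * (Matrix.diagonal c * (S.E j * Matrix.diagonal (star c))))
      = star c ⬝ᵥ (Matrix.hadamard (S.E i) (S.E j)) *ᵥ c := by
    have expand : ∀ u : X, (S.E i * (Matrix.diagonal c * (S.E j * Matrix.diagonal (star c)))) u u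
        = ∑ w : X, S.E i u w * c w * S.E j w u * star (c u) := by
      intro u
      rw [show S.E i * (Matrix.diagonal c * (S.E j * Matrix.diagonal (star c)))
          = (S.E i * Matrix.diagonal c) * (S.E j * Matrix.diagonal (star c)) by
        simp only [Matrix.mul_assoc]]
      rw [Matrix.mul_apply]
      refine Finset.sum_congr rfl fun w _ => ?_
      rw [Matrix.mul_diagonal, Matrix.mul_diagonal]
      simp only [Pi.star_apply]
      ring
    simp only [Matrix.trace, Matrix.diag, expand, dotProduct, Matrix.mulVec,
      Matrix.hadamard_apply, Pi.star_apply, Finset.mul_sum]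
    refine Finset.sum_congr rfl fun u _ => Finset.sum_congr rfl fun w _ => ?_
    rw [aux_E_symm S j hj u w]
    ring
  rw [lhs_eq, S.hKrein i hi j hj]
  have hcol : ∀ g ∈ Finset.range (S.D + 1), g ≠ h → (S.q g i j : ℂ) • (S.E g *ᵥ c) = 0 := by
    intro g hg hgh
    have hgD : g ≤ S.D := by have := Finset.mem_range.mp hg; omega
    rw [hc, Matrix.mulVec_mulVec, S.hEmul g hgD h hh, if_neg hgh]
    simp [Matrix.zero_mulVec]
  have hfix : S.E h *ᵥ c = c := by
    rw [hc, Matrix.mulVec_mulVec, S.hEmul h hh h hh]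
    simp
  have hsum2 : (((Fintype.card X : ℂ))⁻¹ • ∑ g ∈ Finset.range (S.D + 1), (S.q g i j : ℂ) • S.E g) *ᵥ c
      = ((Fintype.card X : ℂ)⁻¹ * (S.q h i j : ℂ)) • c := by
    rw [Matrix.smul_mulVec, aux_sum_mulVec]
    simp only [Matrix.smul_mulVec]
    rw [Finset.sum_eq_single h (fun g hg hgh => hcol g hg hgh)
      (fun habs => absurd (Finset.mem_range.mpr (by omega)) habs)]
    rw [hfix, smul_smul]
  rw [hsum2]
  simp [dotProduct_smul, mul_assoc]


lemma aux_h1D : 1 ≤ S.D := by have := S.hD3; omega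

lemma aux_dot_star_self_eq_zero {v : X → ℂ} (h : star v ⬝ᵥ v = 0) : v = 0 := by
  have h1 : star v ⬝ᵥ v = ((∑ y : X, Complex.normSq (v y) : ℝ) : ℂ) := by
    unfold dotProduct
    push_cast
    refine Finset.sum_congr rfl fun y _ => ?_
    rw [Pi.star_apply, RCLike.star_def, mul_comm, Complex.mul_conj]
  rw [h1] at h
  have h2 : (∑ y : X, Complex.normSq (v y) : ℝ) = 0 := by exact_mod_cast h
  have h3 := (Finset.sum_eq_zero_iff_of_nonneg fun y _ => Complex.normSq_nonneg _).mp h2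
  ext y
  simpa using Complex.normSq_eq_zero.mp (h3 y (by simp))

lemma aux_q_zero_mat (i j h : ℕ) (hi : i ≤ S.D) (hj : j ≤ S.D) (hh : h ≤ S.D)
    (hq : S.q h i j = 0) (v : X → ℂ) :
    S.E i * Matrix.diagonal (S.E h *ᵥ v) * S.E j = 0 := by
  apply (aux_trace_mul_conjTranspose_self_eq_zero _).mp
  rw [aux_KI S i j h hi hj hh v, hq]
  simp

lemma aux_q_ne_mat (i j h : ℕ) (hi : i ≤ S.D) (hj : j ≤ S.D) (hh : h ≤ S.D)
    (hq : S.q h i j ≠ 0) (v : X → ℂ) (hv : S.E h *ᵥ v ≠ 0) :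
    S.E i * Matrix.diagonal (S.E h *ᵥ v) * S.E j ≠ 0 := by
  intro h0
  have htr := (aux_trace_mul_conjTranspose_self_eq_zero
    (S.E i * Matrix.diagonal (S.E h *ᵥ v) * S.E j)).mpr h0
  rw [aux_KI S i j h hi hj hh v] at htr
  have hdot : star (S.E h *ᵥ v) ⬝ᵥ (S.E h *ᵥ v) ≠ 0 := fun hd =>
    hv (aux_dot_star_self_eq_zero hd)
  rcases mul_eq_zero.mp htr with h1 | h2
  · rcases mul_eq_zero.mp h1 with h3 | h4
    · exact S.aux_cardX_ne (inv_eq_zero.mp h3)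
    · exact hq (by exact_mod_cast h4)
  · exact hdot h2

lemma aux_E_ne (j : ℕ) (hj : j ≤ S.D) : S.E j ≠ 0 := by
  induction j with
  | zero =>
    intro h0
    obtain ⟨y⟩ := S.aux_nonempty
    have h1 : ((Fintype.card X : ℂ))⁻¹ • (Matrix.of (fun _ _ => (1:ℂ)) : Matrix X X ℂ) = 0 := by
      rw [← S.hE0]; exact h0
    have h2 := congrFun (congrFun h1 y) y
    simp only [Matrix.smul_apply, Matrix.of_apply, smul_eq_mul, mul_one,
      Matrix.zero_apply] at h2
    exact S.aux_cardX_ne (by simpa using inv_eq_zero.mp h2)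
  | succ n ih =>
    have hn : n ≤ S.D := by omega
    have hEn := ih hn
    have hex : ∃ y z, S.E n y z ≠ 0 := by
      by_contra hco
      push_neg at hco
      exact hEn (Matrix.ext fun y z => by simpa using hco y z)
    obtain ⟨y, z, hyz⟩ := hex
    have hv : S.E n *ᵥ Pi.single z 1 ≠ 0 := by
      intro h0
      have h1 := congrFun h0 y
      rw [Matrix.mulVec_single_one] at h1
      simp only [mul_one, Pi.zero_apply] at h1
      exact hyz h1
    have hq : S.q n 1 (n+1) ≠ 0 :=
      S.hq_ne n hn 1 (S.aux_h1D) (n+1) hj (Or.inr (Or.inr (by omega)))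
    have hne := aux_q_ne_mat S 1 (n+1) n (S.aux_h1D) hj hn hq (Pi.single z 1) hv
    intro h0
    apply hne
    rw [h0, Matrix.mul_zero]

lemma aux_E_dist_const (i : ℕ) (hi : i ≤ S.D) {y z y' z' : X}
    (hd : S.G.dist y z = S.G.dist y' z') : S.E i y z = S.E i y' z' := by
  have key : ∀ B ∈ Submodule.span ℂ
      {B : Matrix X X ℂ | ∃ k ≤ S.D, B = Matrix.of (fun y z => if S.G.dist y z = k then (1 : ℂ) else 0)},
      ∀ (y z y' z' : X), S.G.dist y z = S.G.dist y' z' → B y z = B y' z' := by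
    intro B hB
    induction hB using Submodule.span_induction with
    | mem B hB =>
      intro y z y' z' hd
      obtain ⟨k, hk, rfl⟩ := hB
      simp only [Matrix.of_apply, hd]
    | zero => intro y z y' z' _; simp
    | add B C hB hC ihB ihC =>
      intro y z y' z' hd
      simp only [Matrix.add_apply, ihB y z y' z' hd, ihC y z y' z' hd]
    | smul c B hB ihB =>
      intro y z y' z' hd
      simp only [Matrix.smul_apply, ihB y z y' z' hd]
  exact key _ (S.hEinM i hi) y z y' z' hd

lemma aux_E_diag_const (i : ℕ) (hi : i ≤ S.D) (y : X) : S.E i y y = S.E i x x :=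
  aux_E_dist_const S i hi (by rw [SimpleGraph.dist_self, SimpleGraph.dist_self])

lemma aux_Exx_ne (i : ℕ) (hi : i ≤ S.D) : S.E i x x ≠ 0 := by
  have htr : Matrix.trace (S.E i * (S.E i)ᴴ) = (Fintype.card X : ℂ) * S.E i x x := by
    rw [aux_E_conjTranspose S i hi,
      show S.E i * S.E i = S.E i by simpa using S.hEmul i hi i hi]
    unfold Matrix.trace
    simp only [Matrix.diag_apply]
    rw [Finset.sum_congr rfl fun y _ => aux_E_diag_const S x i hi y]
    simp [Finset.sum_const, mul_comm]
  intro h0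
  apply aux_E_ne S i hi
  apply (aux_trace_mul_conjTranspose_self_eq_zero _).mp
  rw [htr, h0, mul_zero]

/-- The vector `e_j = E_j x̂` (the `x`-column of `E_j`). -/
def auxe (j : ℕ) : X → ℂ := fun y => S.E j y x

lemma aux_e_mulVec (j : ℕ) : S.E j *ᵥ Pi.single x 1 = S.auxe x j := by
  ext y
  rw [Matrix.mulVec_single]
  simp [auxe]

lemma aux_e_dot (i jj : ℕ) (hi : i ≤ S.D) (hj : jj ≤ S.D) :
    star (S.auxe x i) ⬝ᵥ S.auxe x jj = if i = jj then S.E i x x else 0 := by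
  have h1 : star (S.auxe x i) ⬝ᵥ S.auxe x jj = ∑ y : X, S.E i x y * S.E jj y x := by
    unfold dotProduct
    refine Finset.sum_congr rfl fun y _ => ?_
    simp only [Pi.star_apply, auxe, RCLike.star_def, aux_E_entry_real S i hi]
    rw [aux_E_symm S i hi y x]
  rw [h1, ← Matrix.mul_apply, S.hEmul i hi jj hj]
  by_cases h : i = jj <;> simp [h]

lemma aux_e_ne (j : ℕ) (hj : j ≤ S.D) : S.auxe x j ≠ 0 := by
  intro h0
  have := aux_e_dot S x j j hj hj
  rw [h0] at this
  simp only [dotProduct_zero, if_pos rfl] at this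
  exact aux_Exx_ne S x j hj this.symm

/-- The dual eigenvalue `θ*_i`. -/
def auxθs (i : ℕ) : ℂ :=
  if h : ∃ y : X, S.G.dist x y = i then (Fintype.card X : ℂ) * S.E 1 x h.choose else 0

lemma aux_θs_spec (y : X) :
    S.auxθs x (S.G.dist x y) = (Fintype.card X : ℂ) * S.E 1 x y := by
  have hex : ∃ z : X, S.G.dist x z = S.G.dist x y := ⟨y, rfl⟩
  rw [auxθs, dif_pos hex]
  congr 1
  exact aux_E_dist_const S 1 (S.aux_h1D) hex.choose_spec

lemma aux_Astar_diagonal :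
    S.Astar x = Matrix.diagonal (fun y => S.auxθs x (S.G.dist x y)) := by
  unfold Astar
  ext y z
  by_cases hyz : y = z
  · subst hyz
    rw [Matrix.diagonal_apply_eq, Matrix.diagonal_apply_eq, aux_θs_spec]
  · rw [Matrix.diagonal_apply_ne _ hyz, Matrix.diagonal_apply_ne _ hyz]

lemma aux_Astar_mulVec_e (j : ℕ) (hj : j ≤ S.D) :
    S.Astar x *ᵥ S.auxe x j
      = ∑ g ∈ Finset.range (S.D+1), (S.q g 1 j : ℂ) • S.auxe x g := by
  have hK := S.hKrein 1 (S.aux_h1D) j hj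
  ext y
  have hl : (S.Astar x *ᵥ S.auxe x j) y
      = (Fintype.card X : ℂ) * (Matrix.hadamard (S.E 1) (S.E j)) y x := by
    unfold Astar
    rw [Matrix.mulVec_diagonal]
    rw [Matrix.hadamard_apply]
    rw [aux_E_symm S 1 (S.aux_h1D) y x]
    simp only [auxe]
    ring
  rw [hl, hK]
  simp only [Matrix.smul_apply, Matrix.sum_apply, Finset.sum_apply, smul_eq_mul,
    Pi.smul_apply]
  rw [← mul_assoc, mul_inv_cancel₀ S.aux_cardX_ne, one_mul]
  rfl

/-- Span of `e_0, …, e_{m-1}`. -/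
def auxSP (m : ℕ) : Submodule ℂ (X → ℂ) := Submodule.span ℂ ((S.auxe x) '' (Set.Iio m))

lemma aux_SP_mono {m n : ℕ} (h : m ≤ n) : S.auxSP x m ≤ S.auxSP x n :=
  Submodule.span_mono (Set.image_mono fun _ hg => lt_of_lt_of_le hg h)

lemma aux_e_mem_SP {g m : ℕ} (h : g < m) : S.auxe x g ∈ S.auxSP x m :=
  Submodule.subset_span ⟨g, h, rfl⟩

lemma aux_Astar_e_mem (k : ℕ) (hk : k ≤ S.D) :
    S.Astar x *ᵥ S.auxe x k ∈ S.auxSP x (k+2) := by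
  rw [aux_Astar_mulVec_e S x k hk]
  refine Submodule.sum_mem _ fun g hg => ?_
  have hgD : g ≤ S.D := by have := Finset.mem_range.mp hg; omega
  by_cases hgk : g < k + 2
  · exact Submodule.smul_mem _ _ (aux_e_mem_SP S x hgk)
  · rw [S.hq_zero g hgD 1 (S.aux_h1D) k hk (Or.inl (by omega))]
    simp

lemma aux_Astar_SP {m : ℕ} (hm : m ≤ S.D) {w : X → ℂ} (hw : w ∈ S.auxSP x m) :
    S.Astar x *ᵥ w ∈ S.auxSP x (m+1) := by
  induction hw using Submodule.span_induction with
  | mem b hb =>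
    obtain ⟨g, hg, rfl⟩ := hb
    have hg' : g < m := hg
    exact aux_SP_mono S x (by omega) (aux_Astar_e_mem S x g (by omega))
  | zero => rw [Matrix.mulVec_zero]; exact Submodule.zero_mem _
  | add u v hu hv ihu ihv => rw [Matrix.mulVec_add]; exact Submodule.add_mem _ ihu ihv
  | smul c u hu ihu => rw [Matrix.mulVec_smul]; exact Submodule.smul_mem _ _ ihu

lemma aux_Astar_e_step (j : ℕ) (hjD : j + 1 ≤ S.D) :
    S.Astar x *ᵥ S.auxe x j - (S.q (j+1) 1 j : ℂ) • S.auxe x (j+1) ∈ S.auxSP x (j+1) := by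
  rw [aux_Astar_mulVec_e S x j (by omega)]
  have hsplit : ∑ g ∈ Finset.range (S.D+1), (S.q g 1 j : ℂ) • S.auxe x g
      = ∑ g ∈ Finset.range (j+2), (S.q g 1 j : ℂ) • S.auxe x g := by
    symm
    apply Finset.sum_subset (Finset.range_subset_range.mpr (by omega))
    intro g hg hgn
    have hgD : g ≤ S.D := by have := Finset.mem_range.mp hg; omega
    have hgj : j + 1 < g := by
      have := Finset.mem_range.not.mp hgn; omega
    rw [S.hq_zero g hgD 1 (S.aux_h1D) j (by omega) (Or.inl (by omega))]
    simp
  rw [hsplit, Finset.sum_range_succ, add_sub_cancel_right]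
  exact Submodule.sum_mem _ fun g hg =>
    Submodule.smul_mem _ _ (aux_e_mem_SP S x (Finset.mem_range.mp hg))

lemma aux_list_lower (ts : List ℂ) (hts : ts.length ≤ S.D) :
    ∃ w ∈ S.auxSP x ts.length,
      ((ts.map (fun t => S.Astar x - t • (1 : Matrix X X ℂ))).prod) *ᵥ S.auxe x 0
        = (∏ l ∈ Finset.range ts.length, (S.q (l+1) 1 l : ℂ)) • S.auxe x ts.length + w := by
  induction ts with
  | nil => exact ⟨0, Submodule.zero_mem _, by simp⟩
  | cons t ts ih =>
    have hts' : ts.length ≤ S.D := by simp only [List.length_cons] at hts; omega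
    obtain ⟨w, hw, heq⟩ := ih hts'
    set m := ts.length with hm
    have hmD : m + 1 ≤ S.D := by simp only [List.length_cons] at hts; omega
    set γ : ℂ := ∏ l ∈ Finset.range m, (S.q (l+1) 1 l : ℂ) with hγ
    simp only [List.map_cons, List.prod_cons, List.length_cons]
    rw [← Matrix.mulVec_mulVec, heq]
    have hstep := aux_Astar_e_step S x m hmD
    set w' : X → ℂ := S.Astar x *ᵥ S.auxe x m - (S.q (m+1) 1 m : ℂ) • S.auxe x (m+1)
      with hw'
    refine ⟨γ • w' - (t * γ) • S.auxe x m + (S.Astar x *ᵥ w - t • w), ?_, ?_⟩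
    · refine Submodule.add_mem _ (Submodule.sub_mem _ ?_ ?_) (Submodule.sub_mem _ ?_ ?_)
      · exact Submodule.smul_mem _ _ (aux_SP_mono S x (by omega) hstep)
      · exact Submodule.smul_mem _ _ (aux_e_mem_SP S x (by omega))
      · exact aux_SP_mono S x (by omega) (aux_Astar_SP S x hts' hw)
      · exact Submodule.smul_mem _ _ (aux_SP_mono S x (by omega) hw)
    · rw [Matrix.sub_mulVec, Matrix.mulVec_add, Matrix.mulVec_smul]
      rw [Matrix.smul_mulVec, Matrix.one_mulVec]
      rw [Finset.prod_range_succ]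
      have hAe : S.Astar x *ᵥ S.auxe x m = (S.q (m+1) 1 m : ℂ) • S.auxe x (m+1) + w' := by
        rw [hw']; abel
      rw [hAe]
      simp only [smul_add, smul_smul, smul_sub]
      module


lemma aux_dot_SP {m : ℕ} (hm : m ≤ S.D) {w : X → ℂ} (hw : w ∈ S.auxSP x m) :
    star (S.auxe x m) ⬝ᵥ w = 0 := by
  induction hw using Submodule.span_induction with
  | mem b hb =>
    obtain ⟨g, hg, rfl⟩ := hb
    have hg' : g < m := hg
    rw [aux_e_dot S x m g hm (by omega), if_neg (by omega)]
  | zero => simp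
  | add u v hu hv ihu ihv => rw [dotProduct_add, ihu, ihv, add_zero]
  | smul c u hu ihu => rw [dotProduct_smul, ihu, smul_zero]

lemma aux_diag_list_prod (d : X → ℂ) (L : List ℂ) :
    (L.map (fun t => Matrix.diagonal d - t • (1 : Matrix X X ℂ))).prod
      = Matrix.diagonal (fun y => (L.map (fun t => d y - t)).prod) := by
  induction L with
  | nil => simp [Matrix.diagonal_one]
  | cons t ts ih =>
    simp only [List.map_cons, List.prod_cons, ih]
    have hstep : Matrix.diagonal d - t • (1 : Matrix X X ℂ)
        = Matrix.diagonal (fun y => d y - t) := by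
      ext y z
      by_cases hyz : y = z
      · subst hyz
        simp [Matrix.diagonal_apply_eq, Matrix.one_apply_eq]
      · simp [Matrix.diagonal_apply_ne _ hyz, Matrix.one_apply_ne hyz]
    rw [hstep, Matrix.diagonal_mul_diagonal]

lemma aux_prodq_ne (m : ℕ) (hm : m ≤ S.D) :
    (∏ l ∈ Finset.range m, (S.q (l+1) 1 l : ℂ)) ≠ 0 := by
  rw [Finset.prod_ne_zero_iff]
  intro l hl
  have hlm : l < m := Finset.mem_range.mp hl
  have hq : S.q (l+1) 1 l ≠ 0 :=
    S.hq_ne (l+1) (by omega) 1 (S.aux_h1D) l (by omega) (Or.inl (by omega))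
  exact_mod_cast hq

lemma aux_VF_card :
    S.D + 1 ≤ (Finset.image (fun y : X => (Fintype.card X : ℂ) * S.E 1 x y)
      Finset.univ).card := by
  by_contra hlt
  push_neg at hlt
  set VF := Finset.image (fun y : X => (Fintype.card X : ℂ) * S.E 1 x y) Finset.univ with hVF
  set L := VF.toList with hL
  have hlen : L.length ≤ S.D := by
    rw [hL, Finset.length_toList]
    omega
  obtain ⟨w, hw, heq⟩ := aux_list_lower S x L hlen
  have hzero : (L.map (fun t => S.Astar x - t • (1 : Matrix X X ℂ))).prod = 0 := by
    have hAd : S.Astar x = Matrix.diagonal (fun y => (Fintype.card X : ℂ) * S.E 1 x y) := rfl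
    rw [hAd, aux_diag_list_prod]
    have hdiagzero : ∀ y : X, ((L.map (fun t => (Fintype.card X : ℂ) * S.E 1 x y - t)).prod) = 0 := by
      intro y
      apply List.prod_eq_zero
      have hmem : (Fintype.card X : ℂ) * S.E 1 x y ∈ L :=
        Finset.mem_toList.mpr (Finset.mem_image_of_mem _ (Finset.mem_univ y))
      exact List.mem_map.mpr ⟨_, hmem, sub_self _⟩
    ext y z
    by_cases hyz : y = z
    · subst hyz; simp [Matrix.diagonal_apply_eq, hdiagzero]
    · simp [Matrix.diagonal_apply_ne _ hyz]
  rw [hzero, Matrix.zero_mulVec] at heq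
  have hdot := congrArg (fun u => star (S.auxe x L.length) ⬝ᵥ u) heq.symm
  simp only [dotProduct_zero, dotProduct_add, dotProduct_smul] at hdot
  rw [aux_dot_SP S x hlen hw, add_zero, aux_e_dot S x L.length L.length hlen hlen,
    if_pos rfl, smul_eq_mul] at hdot
  exact mul_ne_zero (aux_prodq_ne S (L.length) hlen) (aux_Exx_ne S x (L.length) hlen)
    hdot

lemma aux_θs_inj (i j : ℕ) (hi : i ≤ S.D) (hj : j ≤ S.D)
    (hij : S.auxθs x i = S.auxθs x j) : i = j := by
  set VF := Finset.image (fun y : X => (Fintype.card X : ℂ) * S.E 1 x y) Finset.univ with hVF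
  have hsub : VF ⊆ Finset.image (S.auxθs x) (Finset.range (S.D + 1)) := by
    intro t ht
    obtain ⟨y, -, rfl⟩ := Finset.mem_image.mp ht
    refine Finset.mem_image.mpr ⟨S.G.dist x y, ?_, aux_θs_spec S x y⟩
    exact Finset.mem_range.mpr (by have := S.dist_le x y; omega)
  have hc1 : S.D + 1 ≤ (Finset.image (S.auxθs x) (Finset.range (S.D + 1))).card :=
    le_trans (aux_VF_card S x) (Finset.card_le_card hsub)
  have hc2 : (Finset.image (S.auxθs x) (Finset.range (S.D + 1))).card
      = (Finset.range (S.D + 1)).card := by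
    have := Finset.card_image_le (s := Finset.range (S.D + 1)) (f := S.auxθs x)
    rw [Finset.card_range] at this ⊢
    omega
  have hinj := Finset.card_image_iff.mp hc2
  have h1 : i ∈ (Finset.range (S.D+1) : Finset ℕ) := Finset.mem_range.mpr (by omega)
  have h2 : j ∈ (Finset.range (S.D+1) : Finset ℕ) := Finset.mem_range.mpr (by omega)
  exact hinj (Finset.mem_coe.mpr h1) (Finset.mem_coe.mpr h2) hij

/-- Lagrange interpolation: members of a resolution of the identity by pairwise orthogonal
idempotents with distinct coefficients lie in any subalgebra containing their combination. -/
lemma aux_lagrange (P : ℕ → Matrix X X ℂ) (c : ℕ → ℂ) (s : Finset ℕ)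
    (horth : ∀ i ∈ s, ∀ j ∈ s, P i * P j = if i = j then P i else 0)
    (hsum : ∑ i ∈ s, P i = 1)
    (hinj : ∀ i ∈ s, ∀ j ∈ s, c i = c j → i = j)
    (T : Subalgebra ℂ (Matrix X X ℂ))
    (hM : (∑ i ∈ s, c i • P i) ∈ T) :
    ∀ i ∈ s, P i ∈ T := by
  set M : Matrix X X ℂ := ∑ i ∈ s, c i • P i with hMdef
  have hMP : ∀ j ∈ s, M * P j = c j • P j := by
    intro j hj
    rw [hMdef, Finset.sum_mul]
    rw [Finset.sum_eq_single j]
    · rw [Matrix.smul_mul, horth j hj j hj, if_pos rfl]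
    · intro i hi hij
      rw [Matrix.smul_mul, horth i hi j hj, if_neg hij, smul_zero]
    · intro habs; exact absurd hj habs
  have hcomm : ∀ (t : Finset ℕ), Set.Pairwise (↑t : Set ℕ)
      fun a b => Commute (M - c a • 1) (M - c b • 1) := by
    intro t a _ b _ _
    have h1 : Commute M (M - c b • (1 : Matrix X X ℂ)) :=
      (Commute.refl M).sub_right ((Commute.one_right M).smul_right (c b))
    have h2 : Commute (c a • (1 : Matrix X X ℂ)) (M - c b • 1) :=
      (((Commute.one_left M).smul_left (c a)).sub_right
        (((Commute.one_left (1 : Matrix X X ℂ)).smul_left (c a)).smul_right (c b)))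
    exact h1.sub_left h2
  have key : ∀ t : Finset ℕ, t ⊆ s →
      t.noncommProd (fun k => M - c k • 1) (hcomm t)
        = ∑ j ∈ s, (∏ k ∈ t, (c j - c k)) • P j := by
    intro t
    induction t using Finset.induction_on with
    | empty =>
      intro _
      rw [Finset.noncommProd_empty]
      simp only [Finset.prod_empty, one_smul]
      exact hsum.symm
    | @insert a t ha ih =>
      intro hsub
      have hts : t ⊆ s := fun b hb => hsub (Finset.mem_insert_of_mem hb)
      rw [Finset.noncommProd_insert_of_notMem _ _ _ _ ha, ih hts, Finset.mul_sum]
      refine Finset.sum_congr rfl fun j hj => ?_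
      rw [Finset.prod_insert ha, Matrix.mul_smul, Matrix.sub_mul, hMP j hj, Matrix.smul_mul,
        Matrix.one_mul, ← sub_smul, smul_smul, mul_comm]
  intro i hi
  have hkey := key (s.erase i) (Finset.erase_subset _ _)
  have hcollapse : ∑ j ∈ s, (∏ k ∈ s.erase i, (c j - c k)) • P j
      = (∏ k ∈ s.erase i, (c i - c k)) • P i := by
    rw [Finset.sum_eq_single i]
    · intro j hj hji
      have hjmem : j ∈ s.erase i := Finset.mem_erase.mpr ⟨hji, hj⟩
      rw [Finset.prod_eq_zero hjmem (sub_self (c j)), zero_smul]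
    · intro habs; exact absurd hi habs
  have hγ : (∏ k ∈ s.erase i, (c i - c k)) ≠ 0 := by
    rw [Finset.prod_ne_zero_iff]
    intro k hk
    obtain ⟨hki, hks⟩ := Finset.mem_erase.mp hk
    intro h0
    exact hki (hinj i hi k hks (sub_eq_zero.mp h0)).symm
  have hmemprod : ∀ t : Finset ℕ,
      t.noncommProd (fun k => M - c k • 1) (hcomm t) ∈ T := by
    intro t
    induction t using Finset.induction_on with
    | empty => rw [Finset.noncommProd_empty]; exact one_mem T
    | @insert a t ha ih =>
      rw [Finset.noncommProd_insert_of_notMem _ _ _ _ ha]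
      exact mul_mem (sub_mem hM (T.smul_mem (one_mem T) (c a))) ih
  have hPi : P i = (∏ k ∈ s.erase i, (c i - c k))⁻¹ •
      (s.erase i).noncommProd (fun k => M - c k • 1) (hcomm _) := by
    rw [hkey, hcollapse, smul_smul, inv_mul_cancel₀ hγ, one_smul]
  rw [hPi]
  exact T.smul_mem (hmemprod _) _


lemma aux_adj_E (i : ℕ) (hi : i ≤ S.D) : S.adj * S.E i = (S.θ i : ℂ) • S.E i :=
  S.hAE i hi

lemma aux_A_sum : S.adj = ∑ i ∈ Finset.range (S.D+1), (S.θ i : ℂ) • S.E i := by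
  conv_lhs => rw [← Matrix.mul_one (S.adj), ← S.hEsum]
  rw [Finset.mul_sum]
  exact Finset.sum_congr rfl fun i hi =>
    aux_adj_E S i (by have := Finset.mem_range.mp hi; omega)

lemma aux_diag_mul (d1 d2 : X → ℂ) :
    Matrix.diagonal d1 * Matrix.diagonal d2 = Matrix.diagonal (fun y => d1 y * d2 y) := by
  rw [Matrix.diagonal_mul_diagonal]

lemma aux_diag_ext {d1 d2 : X → ℂ} (h : ∀ y, d1 y = d2 y) :
    Matrix.diagonal d1 = Matrix.diagonal d2 := congrArg _ (funext h)

lemma aux_Estar_mul (i j : ℕ) :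
    S.Estar x i * S.Estar x j = if i = j then S.Estar x i else 0 := by
  unfold Estar
  rw [aux_diag_mul]
  by_cases hij : i = j
  · subst hij
    rw [if_pos rfl]
    refine aux_diag_ext fun y => ?_
    by_cases h : S.G.dist x y = i <;> simp [h]
  · rw [if_neg hij, ← Matrix.diagonal_zero]
    refine aux_diag_ext fun y => ?_
    by_cases h1 : S.G.dist x y = i
    · have h2 : ¬ S.G.dist x y = j := fun h => hij (by rw [← h1, h])
      rw [if_pos h1, if_neg h2, mul_zero]
    · rw [if_neg h1, zero_mul]

lemma aux_Estar_sum : ∑ i ∈ Finset.range (S.D+1), S.Estar x i = 1 := by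
  ext y z
  rw [Matrix.sum_apply]
  by_cases hyz : y = z
  · subst hyz
    rw [Matrix.one_apply_eq]
    have hterm : ∀ i ∈ Finset.range (S.D+1), S.Estar x i y y
        = if S.G.dist x y = i then (1:ℂ) else 0 := by
      intro i _
      unfold Estar
      rw [Matrix.diagonal_apply_eq]
    rw [Finset.sum_congr rfl hterm, Finset.sum_ite_eq]
    rw [if_pos (Finset.mem_range.mpr (by have := S.dist_le x y; omega))]
  · have hterm : ∀ i ∈ Finset.range (S.D+1), S.Estar x i y z = 0 := by
      intro i _
      unfold Estar
      rw [Matrix.diagonal_apply_ne _ hyz]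
    rw [Finset.sum_congr rfl hterm, Matrix.one_apply_ne hyz, Finset.sum_const_zero]

lemma aux_Astar_sum :
    S.Astar x = ∑ i ∈ Finset.range (S.D+1), S.auxθs x i • S.Estar x i := by
  rw [aux_Astar_diagonal]
  ext y z
  rw [Matrix.sum_apply]
  by_cases hyz : y = z
  · subst hyz
    rw [Matrix.diagonal_apply_eq]
    have hterm : ∀ i ∈ Finset.range (S.D+1), (S.auxθs x i • S.Estar x i) y y
        = if S.G.dist x y = i then S.auxθs x i else 0 := by
      intro i _
      rw [Matrix.smul_apply]
      unfold Estar
      rw [Matrix.diagonal_apply_eq]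
      by_cases h : S.G.dist x y = i <;> simp [h]
    rw [Finset.sum_congr rfl hterm, Finset.sum_ite_eq]
    rw [if_pos (Finset.mem_range.mpr (by have := S.dist_le x y; omega))]
  · have hterm : ∀ i ∈ Finset.range (S.D+1), (S.auxθs x i • S.Estar x i) y z = 0 := by
      intro i _
      rw [Matrix.smul_apply]
      unfold Estar
      rw [Matrix.diagonal_apply_ne _ hyz, smul_zero]
    rw [Finset.sum_congr rfl hterm, Matrix.diagonal_apply_ne _ hyz, Finset.sum_const_zero]

lemma aux_adj_mem : S.adj ∈ S.Talg x := Algebra.subset_adjoin (by simp)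

lemma aux_Astar_mem : S.Astar x ∈ S.Talg x := Algebra.subset_adjoin (by simp)

lemma aux_E_mem (i : ℕ) (hi : i ≤ S.D) : S.E i ∈ S.Talg x := by
  refine aux_lagrange S.E (fun i => (S.θ i : ℂ)) (Finset.range (S.D+1))
    (fun i hi j hj => S.hEmul i (by have := Finset.mem_range.mp hi; omega) j
      (by have := Finset.mem_range.mp hj; omega))
    S.hEsum
    (fun i hi j hj h => S.θ_inj i (by have := Finset.mem_range.mp hi; omega) j
      (by have := Finset.mem_range.mp hj; omega)
      (Complex.ofReal_injective (by simpa using h)))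
    (S.Talg x) ?_ i (Finset.mem_range.mpr (by omega))
  rw [← aux_A_sum]
  exact aux_adj_mem S x

lemma aux_Estar_mem (i : ℕ) (hi : i ≤ S.D) : S.Estar x i ∈ S.Talg x := by
  refine aux_lagrange (S.Estar x) (S.auxθs x) (Finset.range (S.D+1))
    (fun i _ j _ => aux_Estar_mul S x i j) (aux_Estar_sum S x)
    (fun i hi j hj h => aux_θs_inj S x i j (by have := Finset.mem_range.mp hi; omega)
      (by have := Finset.mem_range.mp hj; omega) h)
    (S.Talg x) ?_ i (Finset.mem_range.mpr (by omega))
  rw [← aux_Astar_sum]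
  exact aux_Astar_mem S x

lemma aux_Estar_adj_Estar (g i : ℕ) (hfar : g + 1 < i ∨ i + 1 < g) :
    S.Estar x g * S.adj * S.Estar x i = 0 := by
  ext y z
  unfold Estar
  rw [Matrix.mul_diagonal, Matrix.diagonal_mul, Matrix.zero_apply]
  by_cases h1 : S.G.dist x y = g
  · by_cases h2 : S.G.dist x z = i
    · by_cases h3 : S.G.dist y z = 1
      · exfalso
        have t1 : S.G.dist x z ≤ S.G.dist x y + S.G.dist y z := S.conn.dist_triangle
        have t2 : S.G.dist x y ≤ S.G.dist x z + S.G.dist z y := S.conn.dist_triangle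
        have hc : S.G.dist z y = S.G.dist y z := SimpleGraph.dist_comm
        omega
      · have : S.adj y z = 0 := by
          unfold adj Amat
          simp [h3]
        rw [this]
        ring
    · simp [h2]
  · simp [h1]

lemma aux_Astar_smul_diag :
    S.Astar x = (Fintype.card X : ℂ) • Matrix.diagonal (S.E 1 *ᵥ Pi.single x 1) := by
  unfold Astar
  rw [aux_e_mulVec]
  ext y z
  by_cases hyz : y = z
  · subst hyz
    rw [Matrix.smul_apply, Matrix.diagonal_apply_eq, Matrix.diagonal_apply_eq]
    rw [smul_eq_mul]
    congr 1
    unfold auxe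
    exact aux_E_symm S 1 (S.aux_h1D) x y
  · rw [Matrix.smul_apply, Matrix.diagonal_apply_ne _ hyz, Matrix.diagonal_apply_ne _ hyz,
      smul_zero]

lemma aux_E_Astar_E (g j : ℕ) (hg : g ≤ S.D) (hj : j ≤ S.D) (hfar : g + 1 < j ∨ j + 1 < g) :
    S.E g * S.Astar x * S.E j = 0 := by
  rw [aux_Astar_smul_diag]
  rw [Matrix.mul_smul, Matrix.smul_mul]
  have hq : S.q 1 g j = 0 := by
    refine S.hq_zero 1 (S.aux_h1D) g hg j hj ?_
    rcases hfar with h | h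
    · exact Or.inr (Or.inr (by omega))
    · exact Or.inr (Or.inl (by omega))
  rw [aux_q_zero_mat S g j 1 hg hj (S.aux_h1D) hq (Pi.single x 1), smul_zero]

lemma aux_Astar_Estar (i : ℕ) :
    S.Astar x * S.Estar x i = S.auxθs x i • S.Estar x i := by
  rw [aux_Astar_diagonal]
  unfold Estar
  rw [aux_diag_mul]
  have hsd : S.auxθs x i • Matrix.diagonal (fun y => if S.G.dist x y = i then (1:ℂ) else 0)
      = Matrix.diagonal (fun y => S.auxθs x i * (if S.G.dist x y = i then (1:ℂ) else 0)) := by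
    rw [← Matrix.diagonal_smul]
    exact aux_diag_ext fun y => rfl
  rw [hsd]
  refine aux_diag_ext fun y => ?_
  by_cases h : S.G.dist x y = i
  · rw [h]
  · simp [h]


-- ## module-level infrastructure

lemma aux_L_mul (M N : Matrix X X ℂ) (v : EuclideanSpace ℂ X) :
    Matrix.toEuclideanLin (M * N) v = Matrix.toEuclideanLin M (Matrix.toEuclideanLin N v) := by
  simp [Matrix.toEuclideanLin_apply, Matrix.mulVec_mulVec]

lemma aux_L_one (v : EuclideanSpace ℂ X) :
    Matrix.toEuclideanLin (1 : Matrix X X ℂ) v = v := by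
  simp [Matrix.toEuclideanLin_apply]

lemma aux_L_smul (c : ℂ) (M : Matrix X X ℂ) (v : EuclideanSpace ℂ X) :
    Matrix.toEuclideanLin (c • M) v = c • Matrix.toEuclideanLin M v := by
  rw [_root_.map_smul]
  rfl

lemma aux_L_sum {ι : Type*} (s : Finset ι) (M : ι → Matrix X X ℂ) (v : EuclideanSpace ℂ X) :
    Matrix.toEuclideanLin (∑ i ∈ s, M i) v = ∑ i ∈ s, Matrix.toEuclideanLin (M i) v := by
  rw [map_sum]
  exact LinearMap.sum_apply _ _ _

lemma aux_L_zero (v : EuclideanSpace ℂ X) :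
    Matrix.toEuclideanLin (0 : Matrix X X ℂ) v = 0 := by
  rw [map_zero]
  rfl

/-- A symmetric package of hypotheses for a pair of gradings adapted to the
Terwilliger algebra. -/
structure AuxPair (S : QPolyDRG X) (x : X) : Type _ where
  B1 : Matrix X X ℂ
  B2 : Matrix X X ℂ
  P : ℕ → Matrix X X ℂ
  Q : ℕ → Matrix X X ℂ
  cp : ℕ → ℂ
  cq : ℕ → ℂ
  hT : S.Talg x = Algebra.adjoin ℂ {B1, B2}
  hPmem : ∀ i ≤ S.D, P i ∈ S.Talg x
  hQmem : ∀ i ≤ S.D, Q i ∈ S.Talg x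
  hPsum : ∑ i ∈ Finset.range (S.D+1), P i = 1
  hQsum : ∑ i ∈ Finset.range (S.D+1), Q i = 1
  hPorth : ∀ i ≤ S.D, ∀ j ≤ S.D, P i * P j = if i = j then P i else 0
  hQorth : ∀ i ≤ S.D, ∀ j ≤ S.D, Q i * Q j = if i = j then Q i else 0
  hB1P : ∀ g ≤ S.D, ∀ h ≤ S.D, (g + 1 < h ∨ h + 1 < g) → P g * B1 * P h = 0
  hB2P : ∀ i ≤ S.D, B2 * P i = cp i • P i
  hB1Q : ∀ j ≤ S.D, B1 * Q j = cq j • Q j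
  hB2Q : ∀ g ≤ S.D, ∀ h ≤ S.D, (g + 1 < h ∨ h + 1 < g) → Q g * B2 * Q h = 0

variable {S x}

/-- Swapping the two gradings. -/
def AuxPair.symm (A : AuxPair S x) : AuxPair S x where
  B1 := A.B2
  B2 := A.B1
  P := A.Q
  Q := A.P
  cp := A.cq
  cq := A.cp
  hT := by rw [A.hT, Set.pair_comm]
  hPmem := A.hQmem
  hQmem := A.hPmem
  hPsum := A.hQsum
  hQsum := A.hPsum
  hPorth := A.hQorth
  hQorth := A.hPorth
  hB1P := A.hB2Q
  hB2P := A.hB1Q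
  hB1Q := A.hB2P
  hB2Q := A.hB1P

lemma AuxPair.hB1mem (A : AuxPair S x) : A.B1 ∈ S.Talg x := by
  rw [A.hT]
  exact Algebra.subset_adjoin (by simp)

lemma AuxPair.hB2mem (A : AuxPair S x) : A.B2 ∈ S.Talg x := by
  rw [A.hT]
  exact Algebra.subset_adjoin (by simp)

lemma AuxPair.tri (A : AuxPair S x) {B : Matrix X X ℂ} (hB : B = A.B1 ∨ B = A.B2)
    {g h : ℕ} (hg : g ≤ S.D) (hh : h ≤ S.D) (hfar : g + 1 < h ∨ h + 1 < g) :
    A.P g * B * A.P h = 0 := by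
  rcases hB with rfl | rfl
  · exact A.hB1P g hg h hh hfar
  · rw [Matrix.mul_assoc, A.hB2P h hh, Matrix.mul_smul, A.hPorth g hg h hh,
      if_neg (by omega), smul_zero]

lemma AuxPair.Bmem (A : AuxPair S x) {B : Matrix X X ℂ} (hB : B = A.B1 ∨ B = A.B2) :
    B ∈ S.Talg x := by
  rcases hB with rfl | rfl
  · exact A.hB1mem
  · exact A.hB2mem

lemma aux_isT_of_pair (A : AuxPair S x) (U : Submodule ℂ (EuclideanSpace ℂ X))
    (h1 : ∀ w ∈ U, Matrix.toEuclideanLin A.B1 w ∈ U)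
    (h2 : ∀ w ∈ U, Matrix.toEuclideanLin A.B2 w ∈ U) : S.IsTModule x U := by
  intro B hB
  rw [A.hT] at hB
  induction hB using Algebra.adjoin_induction with
  | mem B hB =>
    rcases Set.mem_insert_iff.mp hB with rfl | hB
    · exact h1
    · rw [Set.mem_singleton_iff.mp hB]
      exact h2
  | algebraMap r =>
    intro w hw
    have : (algebraMap ℂ (Matrix X X ℂ)) r = r • (1 : Matrix X X ℂ) :=
      Algebra.algebraMap_eq_smul_one r
    rw [this, aux_L_smul, aux_L_one]
    exact Submodule.smul_mem _ _ hw
  | add B C hB hC ihB ihC =>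
    intro w hw
    rw [map_add, LinearMap.add_apply]
    exact Submodule.add_mem _ (ihB w hw) (ihC w hw)
  | mul B C hB hC ihB ihC =>
    intro w hw
    rw [aux_L_mul]
    exact ihB _ (ihC w hw)

lemma aux_mapT_le {W : Submodule ℂ (EuclideanSpace ℂ X)} (hW : S.IsTModule x W)
    {B : Matrix X X ℂ} (hB : B ∈ S.Talg x) :
    Submodule.map (Matrix.toEuclideanLin B) W ≤ W := by
  rintro _ ⟨w, hw, rfl⟩
  exact hW B hB w hw

lemma aux_W_le_sup (A : AuxPair S x) (W : Submodule ℂ (EuclideanSpace ℂ X)) :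
    W ≤ ⨆ i ∈ Finset.range (S.D+1), Submodule.map (Matrix.toEuclideanLin (A.P i)) W := by
  intro w hw
  have hdecomp : w = ∑ i ∈ Finset.range (S.D+1), Matrix.toEuclideanLin (A.P i) w := by
    rw [← aux_L_sum, A.hPsum, aux_L_one]
  rw [hdecomp]
  refine Submodule.sum_mem _ fun i hi => ?_
  exact Submodule.mem_iSup_of_mem i (Submodule.mem_iSup_of_mem hi ⟨w, hw, rfl⟩)

lemma aux_kill (A : AuxPair S x) {W W' : Submodule ℂ (EuclideanSpace ℂ X)}
    (s : Finset ℕ) (hs : ∀ i ∈ s, i ≤ S.D)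
    (hle : W ≤ ⨆ i ∈ s, Submodule.map (Matrix.toEuclideanLin (A.P i)) W')
    {k : ℕ} (hk : k ≤ S.D) (hks : k ∉ s) :
    Submodule.map (Matrix.toEuclideanLin (A.P k)) W = ⊥ := by
  rw [Submodule.eq_bot_iff]
  rintro _ ⟨w, hw, rfl⟩
  obtain ⟨μ, hμ⟩ := (Submodule.mem_iSup_finset_iff_exists_sum _ _).mp (hle hw)
  rw [← hμ, map_sum]
  refine Finset.sum_eq_zero fun i hi => ?_
  obtain ⟨v, hv, hveq⟩ := Submodule.coe_mem (μ i)
  rw [← hveq, ← aux_L_mul, A.hPorth k hk i (hs i hi),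
    if_neg (fun h => hks (by rw [h]; exact hi)), aux_L_zero]

lemma aux_tri_map (A : AuxPair S x) {W : Submodule ℂ (EuclideanSpace ℂ X)}
    (hW : S.IsTModule x W) {B : Matrix X X ℂ} (hB : B = A.B1 ∨ B = A.B2)
    {i : ℕ} (hi : i ≤ S.D) {w : EuclideanSpace ℂ X} (hw : w ∈ W) :
    Matrix.toEuclideanLin B (Matrix.toEuclideanLin (A.P i) w)
      ∈ ⨆ g ∈ (Finset.range (S.D+1)).filter (fun g => g ≤ i + 1 ∧ i ≤ g + 1),
          Submodule.map (Matrix.toEuclideanLin (A.P g)) W := by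
  set u := Matrix.toEuclideanLin B (Matrix.toEuclideanLin (A.P i) w) with hu_def
  have hu : u ∈ W := by
    have h1 : Matrix.toEuclideanLin (A.P i) w ∈ W := hW _ (A.hPmem i hi) w hw
    exact hW B (A.Bmem hB) _ h1
  have hBP : u = Matrix.toEuclideanLin (B * A.P i) w := by rw [hu_def, aux_L_mul]
  have hdecomp : u = ∑ g ∈ Finset.range (S.D+1), Matrix.toEuclideanLin (A.P g) u := by
    rw [← aux_L_sum, A.hPsum, aux_L_one]
  rw [hdecomp]
  refine Submodule.sum_mem _ fun g hg => ?_
  have hgD : g ≤ S.D := by have := Finset.mem_range.mp hg; omega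
  by_cases hgood : g ≤ i + 1 ∧ i ≤ g + 1
  · refine Submodule.mem_iSup_of_mem g (Submodule.mem_iSup_of_mem
      (Finset.mem_filter.mpr ⟨hg, hgood⟩) ⟨u, hu, rfl⟩)
  · have hfar : g + 1 < i ∨ i + 1 < g := by omega
    have hzero : A.P g * (B * A.P i) = 0 := by
      rw [← Matrix.mul_assoc]
      exact A.tri hB hgD hi hfar
    rw [hBP, ← aux_L_mul, hzero, aux_L_zero]
    exact Submodule.zero_mem _

lemma aux_diagact (A : AuxPair S x) {i : ℕ} (hi : i ≤ S.D) (v : EuclideanSpace ℂ X) :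
    Matrix.toEuclideanLin A.B2 (Matrix.toEuclideanLin (A.P i) v)
      = A.cp i • Matrix.toEuclideanLin (A.P i) v := by
  rw [← aux_L_mul, A.hB2P i hi, aux_L_smul]


/-- Sum decomposition helper. -/
lemma aux_sup_map_le (T : EuclideanSpace ℂ X →ₗ[ℂ] EuclideanSpace ℂ X)
    (s : Finset ℕ) (p : ℕ → Submodule ℂ (EuclideanSpace ℂ X))
    (V : Submodule ℂ (EuclideanSpace ℂ X))
    (hcomp : ∀ i ∈ s, ∀ w ∈ p i, T w ∈ V) :
    ∀ w ∈ ⨆ i ∈ s, p i, T w ∈ V := by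
  intro w hw
  obtain ⟨μ, hμ⟩ := (Submodule.mem_iSup_finset_iff_exists_sum _ _).mp hw
  rw [← hμ, map_sum]
  exact Submodule.sum_mem _ fun i hi => hcomp i hi _ (Submodule.coe_mem (μ i))

lemma aux_biSup_mono {s t : Finset ℕ} (hst : ∀ i ∈ s, i ∈ t)
    (p : ℕ → Submodule ℂ (EuclideanSpace ℂ X)) :
    (⨆ i ∈ s, p i) ≤ ⨆ i ∈ t, p i :=
  iSup₂_le fun i hi => le_iSup₂_of_le i (hst i hi) le_rfl

lemma aux_biSup_bot {s : Finset ℕ} {p : ℕ → Submodule ℂ (EuclideanSpace ℂ X)}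
    (h : ∀ i ∈ s, p i = ⊥) : (⨆ i ∈ s, p i) = ⊥ :=
  le_bot_iff.mp (iSup₂_le fun i hi => le_of_eq (h i hi))

/-- The diagonal generator moves a filtered sum into the sum with one index removed. -/
lemma aux_diag_sub (A : AuxPair S x) (W : Submodule ℂ (EuclideanSpace ℂ X))
    (s : Finset ℕ) (hs : ∀ i ∈ s, i ≤ S.D) (n : ℕ) :
    ∀ w ∈ (⨆ i ∈ s, Submodule.map (Matrix.toEuclideanLin (A.P i)) W),
      Matrix.toEuclideanLin A.B2 w - A.cp n • w
        ∈ ⨆ i ∈ s.erase n, Submodule.map (Matrix.toEuclideanLin (A.P i)) W := by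
  intro w hw
  obtain ⟨μ, hμ⟩ := (Submodule.mem_iSup_finset_iff_exists_sum _ _).mp hw
  rw [← hμ, map_sum, Finset.smul_sum, ← Finset.sum_sub_distrib]
  refine Submodule.sum_mem _ fun i hi => ?_
  obtain ⟨v, hv, hveq⟩ := Submodule.coe_mem (μ i)
  rw [← hveq, aux_diagact A (hs i hi) v, ← sub_smul]
  by_cases hin : i = n
  · subst hin
    rw [sub_self, zero_smul]
    exact Submodule.zero_mem _
  · refine Submodule.mem_iSup_of_mem i (Submodule.mem_iSup_of_mem
      (Finset.mem_erase.mpr ⟨hin, hi⟩) ?_)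
    exact Submodule.smul_mem _ _ ⟨v, hv, rfl⟩

section Supp

variable (A : AuxPair S x) (W : Submodule ℂ (EuclideanSpace ℂ X))

open scoped Classical in
/-- The support `{i ≤ D : P_i W ≠ 0}`. -/
noncomputable def auxSupp : Finset ℕ :=
  (Finset.range (S.D+1)).filter
    (fun i => Submodule.map (Matrix.toEuclideanLin (A.P i)) W ≠ ⊥)

open scoped Classical in
lemma aux_mem_supp {i : ℕ} :
    i ∈ auxSupp A W ↔ i ≤ S.D ∧ Submodule.map (Matrix.toEuclideanLin (A.P i)) W ≠ ⊥ := by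
  unfold auxSupp
  rw [Finset.mem_filter, Finset.mem_range]
  constructor
  · rintro ⟨h1, h2⟩; exact ⟨by omega, h2⟩
  · rintro ⟨h1, h2⟩; exact ⟨by omega, h2⟩

lemma aux_map_bot_of_not_supp {i : ℕ} (hiD : i ≤ S.D) (hi : i ∉ auxSupp A W) :
    Submodule.map (Matrix.toEuclideanLin (A.P i)) W = ⊥ := by
  by_contra hne
  exact hi ((aux_mem_supp A W).mpr ⟨hiD, hne⟩)

lemma aux_supp_nonempty (hW : S.IsIrredTModule x W) : (auxSupp A W).Nonempty := by
  rw [Finset.nonempty_iff_ne_empty]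
  intro hemp
  apply hW.2.1
  rw [eq_bot_iff]
  refine le_trans (aux_W_le_sup A W) (iSup₂_le fun i hi => ?_)
  have hiD : i ≤ S.D := by have := Finset.mem_range.mp hi; omega
  refine le_of_eq (aux_map_bot_of_not_supp A W hiD ?_)
  rw [hemp]
  exact Finset.notMem_empty i

/-- Interval property of the support. -/
lemma aux_interval (hW : S.IsIrredTModule x W) {i0 j0 k : ℕ}
    (hi0 : i0 ∈ auxSupp A W) (hj0 : j0 ∈ auxSupp A W)
    (hik : i0 ≤ k) (hkj : k ≤ j0) : k ∈ auxSupp A W := by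
  by_contra hk
  have hj0D : j0 ≤ S.D := ((aux_mem_supp A W).mp hj0).1
  have hkD : k ≤ S.D := by omega
  have hkbot : Submodule.map (Matrix.toEuclideanLin (A.P k)) W = ⊥ :=
    aux_map_bot_of_not_supp A W hkD hk
  have hik' : i0 < k := lt_of_le_of_ne hik (fun h => hk (h ▸ hi0))
  have hkj' : k < j0 := lt_of_le_of_ne hkj (fun h => hk (h ▸ hj0))
  set U : Submodule ℂ (EuclideanSpace ℂ X) :=
    ⨆ h ∈ Finset.range k, Submodule.map (Matrix.toEuclideanLin (A.P h)) W with hU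
  have hUW : U ≤ W := iSup₂_le fun h hh =>
    aux_mapT_le hW.1 (A.hPmem h (by have := Finset.mem_range.mp hh; omega))
  have hinv : ∀ B, (B = A.B1 ∨ B = A.B2) → ∀ w ∈ U, Matrix.toEuclideanLin B w ∈ U := by
    intro B hB
    refine aux_sup_map_le _ _ _ _ ?_
    intro h hh w hwmem
    have hhk : h < k := Finset.mem_range.mp hh
    have hhD : h ≤ S.D := by omega
    obtain ⟨v, hv, hveq⟩ := hwmem
    rw [← hveq]
    refine (iSup₂_le fun g hg => ?_ :
      (⨆ g ∈ (Finset.range (S.D+1)).filter (fun g => g ≤ h + 1 ∧ h ≤ g + 1),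
        Submodule.map (Matrix.toEuclideanLin (A.P g)) W) ≤ U)
      (aux_tri_map A hW.1 hB hhD hv)
    obtain ⟨hgr, hg1, hg2⟩ := Finset.mem_filter.mp hg
    by_cases hgk : g < k
    · exact le_iSup₂_of_le g (Finset.mem_range.mpr hgk) le_rfl
    · have : g = k := by omega
      subst this
      rw [hkbot]
      exact bot_le
  have hTU : S.IsTModule x U :=
    aux_isT_of_pair A U (hinv A.B1 (Or.inl rfl)) (hinv A.B2 (Or.inr rfl))
  rcases hW.2.2 U hUW hTU with hbot | htop
  · refine ((aux_mem_supp A W).mp hi0).2 ?_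
    rw [eq_bot_iff, ← hbot]
    exact le_iSup₂_of_le i0 (Finset.mem_range.mpr hik') le_rfl
  · refine ((aux_mem_supp A W).mp hj0).2 ?_
    refine aux_kill A (Finset.range k) (fun i hi => by have := Finset.mem_range.mp hi; omega)
      (le_of_eq htop.symm) hj0D (fun h => by have := Finset.mem_range.mp h; omega)

end Supp

/-- The central span comparison: the support of the `P`-grading is at most as wide as the
support of the `Q`-grading. -/
lemma aux_span_le (A : AuxPair S x) (W : Submodule ℂ (EuclideanSpace ℂ X))
    (hW : S.IsIrredTModule x W) :
    (auxSupp A W).max' (aux_supp_nonempty A W hW)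
        - (auxSupp A W).min' (aux_supp_nonempty A W hW)
      ≤ (auxSupp A.symm W).max' (aux_supp_nonempty A.symm W hW)
        - (auxSupp A.symm W).min' (aux_supp_nonempty A.symm W hW) := by
  classical
  have hneP := aux_supp_nonempty A W hW
  have hneQ := aux_supp_nonempty A.symm W hW
  set ρ := (auxSupp A W).min' hneP with hρ
  set τ := (auxSupp A.symm W).min' hneQ with hτ
  set Mq := (auxSupp A.symm W).max' hneQ with hMq
  have hρD : ρ ≤ S.D := ((aux_mem_supp A W).mp ((auxSupp A W).min'_mem hneP)).1
  have hτMq : τ ≤ Mq := Finset.min'_le _ _ ((auxSupp A.symm W).max'_mem hneQ)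
  have hMqD : Mq ≤ S.D := ((aux_mem_supp A.symm W).mp ((auxSupp A.symm W).max'_mem hneQ)).1
  set F : ℕ → Submodule ℂ (EuclideanSpace ℂ X) := fun n =>
    ⨆ i ∈ (Finset.range (S.D+1)).filter (fun i => i ≤ n),
      Submodule.map (Matrix.toEuclideanLin (A.P i)) W with hF
  set G : ℕ → Submodule ℂ (EuclideanSpace ℂ X) := fun n =>
    ⨆ j ∈ (Finset.range (S.D+1)).filter (fun j => n ≤ j),
      Submodule.map (Matrix.toEuclideanLin (A.Q j)) W with hG
  set U : ℕ → Submodule ℂ (EuclideanSpace ℂ X) := fun h => F (ρ + h) ⊓ G (τ + h) with hUdef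
  set Utot : Submodule ℂ (EuclideanSpace ℂ X) := ⨆ h ∈ Finset.range (S.D+2), U h with hUtot
  -- basic facts
  have hFmono : ∀ {m n : ℕ}, m ≤ n → F m ≤ F n := by
    intro m n hmn
    refine aux_biSup_mono (fun i hi => ?_) _
    obtain ⟨h1, h2⟩ := Finset.mem_filter.mp hi
    exact Finset.mem_filter.mpr ⟨h1, by omega⟩
  have hGanti : ∀ {m n : ℕ}, m ≤ n → G n ≤ G m := by
    intro m n hmn
    refine aux_biSup_mono (fun i hi => ?_) _
    obtain ⟨h1, h2⟩ := Finset.mem_filter.mp hi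
    exact Finset.mem_filter.mpr ⟨h1, by omega⟩
  have hFW : ∀ n, F n ≤ W := fun n => iSup₂_le fun i hi =>
    aux_mapT_le hW.1 (A.hPmem i (by have := Finset.mem_range.mp (Finset.mem_filter.mp hi).1; omega))
  have hGW : ∀ n, G n ≤ W := fun n => iSup₂_le fun i hi =>
    aux_mapT_le hW.1 (A.symm.hPmem i
      (by have := Finset.mem_range.mp (Finset.mem_filter.mp hi).1; omega))
  have hGτ : W ≤ G τ := by
    refine le_trans (aux_W_le_sup A.symm W) (iSup₂_le fun j hj => ?_)
    have hjD : j ≤ S.D := by have := Finset.mem_range.mp hj; omega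
    by_cases hjτ : τ ≤ j
    · exact le_iSup₂_of_le j (Finset.mem_filter.mpr ⟨hj, hjτ⟩) le_rfl
    · rw [aux_map_bot_of_not_supp A.symm W hjD
        (fun hmem => hjτ (Finset.min'_le _ _ hmem))]
      exact bot_le
  have hGbot : ∀ {n : ℕ}, Mq < n → G n = ⊥ := by
    intro n hn
    refine aux_biSup_bot fun j hj => ?_
    obtain ⟨h1, h2⟩ := Finset.mem_filter.mp hj
    have hjD : j ≤ S.D := by have := Finset.mem_range.mp h1; omega
    refine aux_map_bot_of_not_supp A.symm W hjD (fun hmem => ?_)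
    have := Finset.le_max' _ _ hmem
    omega
  have hPρ : Submodule.map (Matrix.toEuclideanLin (A.P ρ)) W ≤ F ρ :=
    le_iSup₂_of_le ρ (Finset.mem_filter.mpr ⟨Finset.mem_range.mpr (by omega), le_rfl⟩) le_rfl
  have hU0 : Submodule.map (Matrix.toEuclideanLin (A.P ρ)) W ≤ Utot := by
    refine le_trans (le_inf hPρ (le_trans (le_trans hPρ (hFW ρ)) hGτ)) ?_
    refine le_iSup₂_of_le 0 (Finset.mem_range.mpr (by omega)) ?_
    show F ρ ⊓ G τ ≤ F (ρ + 0) ⊓ G (τ + 0)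
    simp
  -- step lemmas
  have hFstep : ∀ B, (B = A.B1 ∨ B = A.B2) → ∀ n, ∀ w ∈ F n,
      Matrix.toEuclideanLin B w ∈ F (n+1) := by
    intro B hB n
    refine aux_sup_map_le _ _ _ _ ?_
    intro i hi w hwmem
    obtain ⟨hir, hin⟩ := Finset.mem_filter.mp hi
    have hiD : i ≤ S.D := by have := Finset.mem_range.mp hir; omega
    obtain ⟨v, hv, hveq⟩ := hwmem
    rw [← hveq]
    refine (iSup₂_le fun g hg => ?_ : (⨆ g ∈ (Finset.range (S.D+1)).filter
        (fun g => g ≤ i + 1 ∧ i ≤ g + 1),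
        Submodule.map (Matrix.toEuclideanLin (A.P g)) W) ≤ F (n+1))
      (aux_tri_map A hW.1 hB hiD hv)
    obtain ⟨hgr, hg1, hg2⟩ := Finset.mem_filter.mp hg
    exact le_iSup₂_of_le g (Finset.mem_filter.mpr ⟨hgr, by omega⟩) le_rfl
  have hGstep : ∀ B, (B = A.B1 ∨ B = A.B2) → ∀ n, ∀ w ∈ G (n+1),
      Matrix.toEuclideanLin B w ∈ G n := by
    intro B hB n
    refine aux_sup_map_le _ _ _ _ ?_
    intro j hj w hwmem
    obtain ⟨hjr, hjn⟩ := Finset.mem_filter.mp hj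
    have hjD : j ≤ S.D := by have := Finset.mem_range.mp hjr; omega
    obtain ⟨v, hv, hveq⟩ := hwmem
    have hB' : B = A.symm.B1 ∨ B = A.symm.B2 := by
      rcases hB with h | h
      · exact Or.inr h
      · exact Or.inl h
    rw [← hveq]
    refine (iSup₂_le fun g hg => ?_ : (⨆ g ∈ (Finset.range (S.D+1)).filter
        (fun g => g ≤ j + 1 ∧ j ≤ g + 1),
        Submodule.map (Matrix.toEuclideanLin (A.symm.P g)) W) ≤ G n)
      (aux_tri_map A.symm hW.1 hB' hjD hv)
    obtain ⟨hgr, hg1, hg2⟩ := Finset.mem_filter.mp hg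
    exact le_iSup₂_of_le g (Finset.mem_filter.mpr ⟨hgr, by omega⟩) le_rfl
  -- diagonal subtraction lemmas
  have hFdiag : ∀ n, ∀ w ∈ F n, Matrix.toEuclideanLin A.B2 w - A.cp n • w
      ∈ ⨆ i ∈ ((Finset.range (S.D+1)).filter (fun i => i ≤ n)).erase n,
          Submodule.map (Matrix.toEuclideanLin (A.P i)) W := by
    intro n
    exact aux_diag_sub A W _ (fun i hi => by
      have := Finset.mem_range.mp (Finset.mem_filter.mp hi).1
      omega) n
  have hGdiag : ∀ n, ∀ w ∈ G n, Matrix.toEuclideanLin A.B1 w - A.cq n • w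
      ∈ ⨆ j ∈ ((Finset.range (S.D+1)).filter (fun j => n ≤ j)).erase n,
          Submodule.map (Matrix.toEuclideanLin (A.Q j)) W := by
    intro n
    exact aux_diag_sub A.symm W _ (fun i hi => by
      have := Finset.mem_range.mp (Finset.mem_filter.mp hi).1
      omega) n
  -- invariance of Utot
  have hUh_le : ∀ h, h ∈ Finset.range (S.D+2) → U h ≤ Utot := fun h hh =>
    le_iSup₂_of_le h hh le_rfl
  have hUbig : ∀ h, S.D + 1 ≤ h → U h = ⊥ := by
    intro h hh
    have : G (τ + h) = ⊥ := hGbot (by omega)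
    rw [hUdef]
    simp only []
    rw [this, inf_bot_eq]
  have hinv : ∀ B, (B = A.B1 ∨ B = A.B2) → ∀ w ∈ Utot, Matrix.toEuclideanLin B w ∈ Utot := by
    intro B hB
    refine aux_sup_map_le _ _ _ _ ?_
    intro h hh w hw
    by_cases hhD : h ≤ S.D
    swap
    · rw [hUbig h (by omega)] at hw
      have : w = 0 := hw
      rw [this, map_zero]
      exact Submodule.zero_mem _
    obtain ⟨hwF, hwG⟩ := Submodule.mem_inf.mp hw
    rcases hB with rfl | rfl
    · -- B1 : raises F, diagonal on G
      have hpart1 : Matrix.toEuclideanLin A.B1 w - A.cq (τ + h) • w ∈ U (h+1) := by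
        rw [hUdef]
        refine Submodule.mem_inf.mpr ⟨?_, ?_⟩
        · have h1 : Matrix.toEuclideanLin A.B1 w ∈ F (ρ + h + 1) :=
            hFstep A.B1 (Or.inl rfl) _ w hwF
          have h2 : A.cq (τ + h) • w ∈ F (ρ + h + 1) :=
            Submodule.smul_mem _ _ (hFmono (by omega) hwF)
          have := Submodule.sub_mem _ h1 h2
          simpa [show ρ + (h+1) = ρ + h + 1 by omega] using this
        · have := hGdiag (τ + h) w hwG
          refine (iSup₂_le fun j hj => ?_ : (⨆ j ∈ ((Finset.range (S.D+1)).filter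
              (fun j => τ + h ≤ j)).erase (τ + h),
              Submodule.map (Matrix.toEuclideanLin (A.Q j)) W) ≤ G (τ + (h+1))) this
          obtain ⟨hne, hmem⟩ := Finset.mem_erase.mp hj
          obtain ⟨h1, h2⟩ := Finset.mem_filter.mp hmem
          exact le_iSup₂_of_le j (Finset.mem_filter.mpr ⟨h1, by omega⟩) le_rfl
      have hpart2 : A.cq (τ + h) • w ∈ U h := Submodule.smul_mem _ _ hw
      have : Matrix.toEuclideanLin A.B1 w
          = (Matrix.toEuclideanLin A.B1 w - A.cq (τ + h) • w) + A.cq (τ + h) • w := by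
        abel
      rw [this]
      exact Submodule.add_mem _
        (hUh_le (h+1) (Finset.mem_range.mpr (by omega)) hpart1)
        (hUh_le h hh hpart2)
    · -- B2 : diagonal on F, lowers G
      have hdF := hFdiag (ρ + h) w hwF
      rcases Nat.eq_zero_or_pos h with rfl | hpos
      · -- h = 0 : the F-difference vanishes
        have hbot : (⨆ i ∈ ((Finset.range (S.D+1)).filter
            (fun i => i ≤ ρ + 0)).erase (ρ + 0),
            Submodule.map (Matrix.toEuclideanLin (A.P i)) W) = ⊥ := by
          refine aux_biSup_bot fun i hi => ?_
          obtain ⟨hne, hmem⟩ := Finset.mem_erase.mp hi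
          obtain ⟨h1, h2⟩ := Finset.mem_filter.mp hmem
          have hiD : i ≤ S.D := by have := Finset.mem_range.mp h1; omega
          refine aux_map_bot_of_not_supp A W hiD (fun hmemsupp => ?_)
          have := Finset.min'_le _ _ hmemsupp
          omega
        rw [hbot] at hdF
        have hzero : Matrix.toEuclideanLin A.B2 w = A.cp (ρ + 0) • w := by
          have : Matrix.toEuclideanLin A.B2 w - A.cp (ρ + 0) • w = 0 := hdF
          have h2 := congrArg (fun u => u + A.cp (ρ + 0) • w) this
          simpa [sub_add_cancel] using h2
        rw [hzero]
        exact hUh_le 0 hh (Submodule.smul_mem _ _ hw)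
      · -- h ≥ 1
        obtain ⟨h', rfl⟩ := Nat.exists_eq_add_of_le hpos
        have hpart1 : Matrix.toEuclideanLin A.B2 w - A.cp (ρ + (1 + h')) • w
            ∈ U h' := by
          rw [hUdef]
          refine Submodule.mem_inf.mpr ⟨?_, ?_⟩
          · refine (iSup₂_le fun i hi => ?_ : (⨆ i ∈ ((Finset.range (S.D+1)).filter
                (fun i => i ≤ ρ + (1 + h'))).erase (ρ + (1 + h')),
                Submodule.map (Matrix.toEuclideanLin (A.P i)) W) ≤ F (ρ + h')) hdF
            obtain ⟨hne, hmem⟩ := Finset.mem_erase.mp hi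
            obtain ⟨h1, h2⟩ := Finset.mem_filter.mp hmem
            exact le_iSup₂_of_le i (Finset.mem_filter.mpr ⟨h1, by omega⟩) le_rfl
          · have h1 : Matrix.toEuclideanLin A.B2 w ∈ G (τ + h') := by
              have := hGstep A.B2 (Or.inr rfl) (τ + h') w
                (by
                  have : G (τ + (1 + h')) ≤ G (τ + h' + 1) := le_of_eq (by ring_nf)
                  exact this hwG)
              exact this
            have h2 : A.cp (ρ + (1 + h')) • w ∈ G (τ + h') :=
              Submodule.smul_mem _ _ (hGanti (by omega) hwG)
            exact Submodule.sub_mem _ h1 h2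
        have hpart2 : A.cp (ρ + (1 + h')) • w ∈ U (1 + h') := Submodule.smul_mem _ _ hw
        have hsplit : Matrix.toEuclideanLin A.B2 w
            = (Matrix.toEuclideanLin A.B2 w - A.cp (ρ + (1 + h')) • w)
              + A.cp (ρ + (1 + h')) • w := by abel
        rw [hsplit]
        exact Submodule.add_mem _
          (hUh_le h' (Finset.mem_range.mpr (by have := Finset.mem_range.mp hh; omega)) hpart1)
          (hUh_le (1 + h') hh hpart2)
  -- Utot is an irreducible piece of W, hence equals W
  have hUtotW : Utot ≤ W := iSup₂_le fun h hh => le_trans inf_le_left (hFW _)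
  have hTUtot : S.IsTModule x Utot :=
    aux_isT_of_pair A Utot (hinv A.B1 (Or.inl rfl)) (hinv A.B2 (Or.inr rfl))
  have hUtotEq : Utot = W := by
    rcases hW.2.2 Utot hUtotW hTUtot with hbot | htop
    · exfalso
      refine ((aux_mem_supp A W).mp ((auxSupp A W).min'_mem hneP)).2 ?_
      rw [eq_bot_iff, ← hbot]
      exact hU0
    · exact htop
  -- extract the width bound
  have hWF : W ≤ F (ρ + (Mq - τ)) := by
    rw [← hUtotEq]
    refine iSup₂_le fun h hh => ?_
    by_cases hhM : h ≤ Mq - τ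
    · exact le_trans inf_le_left (hFmono (by omega))
    · have : G (τ + h) = ⊥ := hGbot (by omega)
      rw [hUdef]
      refine le_trans (le_of_eq ?_) bot_le
      simp only []
      rw [this, inf_bot_eq]
  have hkill : ∀ k, k ≤ S.D → ρ + (Mq - τ) < k →
      Submodule.map (Matrix.toEuclideanLin (A.P k)) W = ⊥ := by
    intro k hkD hk
    refine aux_kill A ((Finset.range (S.D+1)).filter (fun i => i ≤ ρ + (Mq - τ)))
      (fun i hi => by have := Finset.mem_range.mp (Finset.mem_filter.mp hi).1; omega)
      hWF hkD ?_
    intro hmem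
    have := (Finset.mem_filter.mp hmem).2
    omega
  have hmax : (auxSupp A W).max' hneP ≤ ρ + (Mq - τ) := by
    by_contra hgt
    push_neg at hgt
    have hmem := (auxSupp A W).max'_mem hneP
    have hD := ((aux_mem_supp A W).mp hmem).1
    exact ((aux_mem_supp A W).mp hmem).2 (hkill _ hD hgt)
  omega


variable (S x)

/-- The main instantiation: `P`-grading by the dual idempotents, `Q`-grading by the
primitive idempotents. -/
noncomputable def auxMainPair : AuxPair S x where
  B1 := S.adj
  B2 := S.Astar x
  P := S.Estar x
  Q := S.E
  cp := S.auxθs x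
  cq := fun i => (S.θ i : ℂ)
  hT := rfl
  hPmem := fun i hi => aux_Estar_mem S x i hi
  hQmem := fun i hi => aux_E_mem S x i hi
  hPsum := aux_Estar_sum S x
  hQsum := S.hEsum
  hPorth := fun i _ j _ => aux_Estar_mul S x i j
  hQorth := fun i hi j hj => S.hEmul i hi j hj
  hB1P := fun g _ h _ hfar => aux_Estar_adj_Estar S x g h hfar
  hB2P := fun i _ => aux_Astar_Estar S x i
  hB1Q := fun j hj => aux_adj_E S j hj
  hB2Q := fun g hg h hh hfar => aux_E_Astar_E S x g h hg hh hfar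

@[simp] lemma auxMainPair_P : (auxMainPair S x).P = S.Estar x := rfl
@[simp] lemma auxMainPair_symm_P : (auxMainPair S x).symm.P = S.E := rfl

lemma aux_supp_eq_Icc (A : AuxPair S x) (W : Submodule ℂ (EuclideanSpace ℂ X))
    (hW : S.IsIrredTModule x W) :
    auxSupp A W = Finset.Icc ((auxSupp A W).min' (aux_supp_nonempty A W hW))
      ((auxSupp A W).max' (aux_supp_nonempty A W hW)) := by
  ext k
  rw [Finset.mem_Icc]
  constructor
  · intro hk
    exact ⟨Finset.min'_le _ _ hk, Finset.le_max' _ _ hk⟩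
  · rintro ⟨h1, h2⟩
    exact aux_interval A W hW ((auxSupp A W).min'_mem _) ((auxSupp A W).max'_mem _) h1 h2

lemma aux_supp_card_eq (W : Submodule ℂ (EuclideanSpace ℂ X))
    (hW : S.IsIrredTModule x W) :
    (auxSupp (auxMainPair S x) W).card = (auxSupp (auxMainPair S x).symm W).card := by
  set A := auxMainPair S x
  have hneP := aux_supp_nonempty A W hW
  have hneQ := aux_supp_nonempty A.symm W hW
  have h1 := aux_span_le A W hW
  have h2 := aux_span_le A.symm W hW
  have hsymm2 : A.symm.symm = A := rfl
  rw [hsymm2] at h2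
  have hcP := congrArg Finset.card (aux_supp_eq_Icc S x A W hW)
  have hcQ := congrArg Finset.card (aux_supp_eq_Icc S x A.symm W hW)
  rw [Nat.card_Icc] at hcP hcQ
  have hminmaxP : (auxSupp A W).min' hneP ≤ (auxSupp A W).max' hneP :=
    Finset.min'_le _ _ ((auxSupp A W).max'_mem hneP)
  have hminmaxQ : (auxSupp A.symm W).min' hneQ ≤ (auxSupp A.symm W).max' hneQ :=
    Finset.min'_le _ _ ((auxSupp A.symm W).max'_mem hneQ)
  omega

lemma aux_EstarW_nat (W : Submodule ℂ (EuclideanSpace ℂ X)) (i : ℕ) (hi : i ≤ S.D) :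
    S.EstarW x W (i : ℤ) = Submodule.map (Matrix.toEuclideanLin (S.Estar x i)) W := by
  unfold EstarW
  rw [if_pos ⟨Int.natCast_nonneg i, by exact_mod_cast hi⟩]
  norm_num

lemma aux_EW_nat (W : Submodule ℂ (EuclideanSpace ℂ X)) (i : ℕ) (hi : i ≤ S.D) :
    S.EW W (i : ℤ) = Submodule.map (Matrix.toEuclideanLin (S.E i)) W := by
  unfold EW
  rw [if_pos ⟨Int.natCast_nonneg i, by exact_mod_cast hi⟩]
  norm_num

theorem drg_diam_eq_dualDiam' (W : Submodule ℂ (EuclideanSpace ℂ X))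
    (hW : S.IsIrredTModule x W) :
    Set.ncard {i : ℕ | i ≤ S.D ∧ S.EstarW x W i ≠ ⊥} =
      Set.ncard {i : ℕ | i ≤ S.D ∧ S.EW W i ≠ ⊥} := by
  have hsetP : {i : ℕ | i ≤ S.D ∧ S.EstarW x W i ≠ ⊥}
      = ↑(auxSupp (auxMainPair S x) W) := by
    ext i
    rw [Set.mem_setOf_eq, Finset.mem_coe, aux_mem_supp, auxMainPair_P]
    constructor
    · rintro ⟨h1, h2⟩
      rw [aux_EstarW_nat S x W i h1] at h2
      exact ⟨h1, h2⟩
    · rintro ⟨h1, h2⟩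
      rw [aux_EstarW_nat S x W i h1]
      exact ⟨h1, h2⟩
  have hsetQ : {i : ℕ | i ≤ S.D ∧ S.EW W i ≠ ⊥}
      = ↑(auxSupp (auxMainPair S x).symm W) := by
    ext i
    rw [Set.mem_setOf_eq, Finset.mem_coe, aux_mem_supp, auxMainPair_symm_P]
    constructor
    · rintro ⟨h1, h2⟩
      rw [aux_EW_nat S W i h1] at h2
      exact ⟨h1, h2⟩
    · rintro ⟨h1, h2⟩
      rw [aux_EW_nat S W i h1]
      exact ⟨h1, h2⟩
  rw [hsetP, hsetQ, Set.ncard_coe_finset, Set.ncard_coe_finset]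
  exact aux_supp_card_eq S x W hW


end QPolyDRG

open QPolyDRG in
/-- The diameter of an irreducible `T`-module equals its dual diameter:
`|{i : 0 ≤ i ≤ D, E*_i W ≠ 0}| = |{i : 0 ≤ i ≤ D, E_i W ≠ 0}|`. -/
theorem drg_diam_eq_dualDiam {X : Type*} [Fintype X] [DecidableEq X] (S : QPolyDRG X) (x : X)
    (W : Submodule ℂ (EuclideanSpace ℂ X)) (hW : S.IsIrredTModule x W) :
    Set.ncard {i : ℕ | i ≤ S.D ∧ S.EstarW x W i ≠ ⊥} =
      Set.ncard {i : ℕ | i ≤ S.D ∧ S.EW W i ≠ ⊥} :=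
  QPolyDRG.drg_diam_eq_dualDiam' S x W hW

end
end

section
/- With the Q-polynomial distance-regular graph setup, let W be an irreducible T-module with endpoint ρ, dual endpoint τ, and diameter d. Then for 0 ≤ h,ℓ ≤ d with h + ℓ ≠ d: (i) W^{↓↓}_h and W^{↑↑}_ℓ are orthogonal with respect to the standard Hermitian form; (ii) W^{↓↑}_h and W^{↑↓}_ℓ are orthogonal with respect to the standard Hermitian form. -/
noncomputable section

open Matrix Finset
open scoped ComplexInnerProductSpace

section Aux

variable {X : Type*} [Fintype X] [DecidableEq X]

private lemma toEuclideanLin_comp_apply (M N : Matrix X X ℂ) (w : EuclideanSpace ℂ X) :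
    Matrix.toEuclideanLin M (Matrix.toEuclideanLin N w) = Matrix.toEuclideanLin (M * N) w := by
  simp [Matrix.toEuclideanLin_apply, Matrix.mulVec_mulVec]

private lemma map_isOrtho {M N : Matrix X X ℂ} (h : Mᴴ * N = 0)
    (W W' : Submodule ℂ (EuclideanSpace ℂ X)) :
    (Submodule.map (Matrix.toEuclideanLin M) W) ⟂ (Submodule.map (Matrix.toEuclideanLin N) W') := by
  rw [Submodule.isOrtho_iff_inner_eq]
  rintro _ ⟨w, -, rfl⟩ _ ⟨w', -, rfl⟩
  have key : Matrix.toEuclideanLin M = LinearMap.adjoint (Matrix.toEuclideanLin Mᴴ) := by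
    rw [← Matrix.toEuclideanLin_conjTranspose_eq_adjoint, Matrix.conjTranspose_conjTranspose]
  rw [key, LinearMap.adjoint_inner_left, toEuclideanLin_comp_apply, h]
  simp

private lemma Estar_conjTranspose (S : QPolyDRG X) (x : X) (i : ℕ) :
    (S.Estar x i)ᴴ = S.Estar x i := by
  ext y z
  simp only [QPolyDRG.Estar, Matrix.conjTranspose_apply, Matrix.diagonal_apply]
  split_ifs <;> simp_all

private lemma Estar_mul_zero (S : QPolyDRG X) (x : X) {i j : ℕ} (hij : i ≠ j) :
    S.Estar x i * S.Estar x j = 0 := by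
  unfold QPolyDRG.Estar
  rw [Matrix.diagonal_mul_diagonal]
  ext y z
  by_cases hy : S.G.dist x y = i <;> simp [Matrix.diagonal_apply, hy, hij] <;> intro h <;> omega

private lemma E_conjTranspose (S : QPolyDRG X) {i : ℕ} (hi : i ≤ S.D) :
    (S.E i)ᴴ = S.E i := by
  ext y z
  have hsym := S.hEsym i hi
  have h1 : S.E i z y = S.E i y z := by
    conv_lhs => rw [← hsym]
    rw [Matrix.transpose_apply]
  rw [Matrix.conjTranspose_apply, h1]
  exact Complex.conj_eq_iff_im.2 (S.hEreal i hi y z)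

private lemma EstarW_ortho (S : QPolyDRG X) (x : X) (W : Submodule ℂ (EuclideanSpace ℂ X))
    {i j : ℤ} (hij : i ≠ j) : S.EstarW x W i ⟂ S.EstarW x W j := by
  unfold QPolyDRG.EstarW
  split_ifs with h1 h2 h2
  · refine map_isOrtho ?_ W W
    rw [Estar_conjTranspose]
    exact Estar_mul_zero S x (by omega)
  · exact Submodule.isOrtho_bot_right
  · exact Submodule.isOrtho_bot_left
  · exact Submodule.isOrtho_bot_left

private lemma EW_ortho (S : QPolyDRG X) (W : Submodule ℂ (EuclideanSpace ℂ X))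
    {i j : ℤ} (hij : i ≠ j) : S.EW W i ⟂ S.EW W j := by
  unfold QPolyDRG.EW
  split_ifs with h1 h2 h2
  · refine map_isOrtho ?_ W W
    rw [E_conjTranspose S (by omega)]
    have := S.hEmul i.toNat (by omega) j.toNat (by omega)
    rwa [if_neg (by omega)] at this
  · exact Submodule.isOrtho_bot_right
  · exact Submodule.isOrtho_bot_left
  · exact Submodule.isOrtho_bot_left

private lemma ortho_biSup {E : Type*} [NormedAddCommGroup E] [InnerProductSpace ℂ E]
    {s t : Finset ℕ} {U V : ℕ → Submodule ℂ E}
    (h : ∀ k ∈ s, ∀ k' ∈ t, U k ⟂ V k') :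
    (⨆ k ∈ s, U k) ⟂ (⨆ k ∈ t, V k) := by
  rw [Submodule.isOrtho_iSup_left]
  intro k
  rw [Submodule.isOrtho_iSup_left]
  intro hk
  rw [Submodule.isOrtho_iSup_right]
  intro k'
  rw [Submodule.isOrtho_iSup_right]
  intro hk'
  exact h k hk k' hk'

end Aux

open QPolyDRG in
/-- For an irreducible `T`-module `W` and `0 ≤ h, ℓ ≤ d` with `h + ℓ ≠ d`:
`W^{↓↓}_h ⊥ W^{↑↑}_ℓ` and `W^{↓↑}_h ⊥ W^{↑↓}_ℓ` with respect to the standard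
Hermitian form. -/
theorem drg_tmodule_split_orth {X : Type*} [Fintype X] [DecidableEq X] (S : QPolyDRG X) (x : X)
    (W : Submodule ℂ (EuclideanSpace ℂ X)) (hW : S.IsIrredTModule x W)
    (ρ τ d : ℕ)
    (hρ : IsLeast {i : ℕ | i ≤ S.D ∧ S.EstarW x W i ≠ ⊥} ρ)
    (hτ : IsLeast {i : ℕ | i ≤ S.D ∧ S.EW W i ≠ ⊥} τ)
    (hd : d + 1 = Set.ncard {i : ℕ | i ≤ S.D ∧ S.EstarW x W i ≠ ⊥}) :
    ∀ h : ℕ, h ≤ d → ∀ l : ℕ, l ≤ d → h + l ≠ d →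
      (∀ u ∈ S.Wsplit x W ρ τ d false false h, ∀ v ∈ S.Wsplit x W ρ τ d true true l,
        ⟪u, v⟫ = 0) ∧
      (∀ u ∈ S.Wsplit x W ρ τ d false true h, ∀ v ∈ S.Wsplit x W ρ τ d true false l,
        ⟪u, v⟫ = 0) := by
  intro h hh l hl hne
  rcases Nat.lt_or_ge (h + l) d with hlt | hge
  · -- h + l < d : use the E* components
    have key : ∀ a b : ℕ, a + b < d → b ≤ d →
        (⨆ k ∈ Finset.Icc ρ (ρ + a), S.EstarW x W k) ⟂
        (⨆ k ∈ Finset.Icc (ρ + d - b) (ρ + d), S.EstarW x W k) := by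
      intro a b hab hbd
      refine ortho_biSup ?_
      intro k hk k' hk'
      rw [Finset.mem_Icc] at hk hk'
      refine EstarW_ortho S x W ?_
      have : k ≠ k' := by omega
      exact_mod_cast this
    constructor
    · intro u hu v hv
      simp only [QPolyDRG.Wsplit, if_neg Bool.false_ne_true, if_pos rfl,
        Submodule.mem_inf] at hu hv
      exact (key h l hlt hl).inner_eq hu.1 hv.1
    · intro u hu v hv
      simp only [QPolyDRG.Wsplit, if_neg Bool.false_ne_true, if_pos rfl,
        Submodule.mem_inf] at hu hv
      exact (key h l hlt hl).inner_eq hu.1 hv.1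
  · -- h + l > d : use the E components
    have hgt : d < h + l := lt_of_le_of_ne hge (Ne.symm hne)
    constructor
    · intro u hu v hv
      simp only [QPolyDRG.Wsplit, if_neg Bool.false_ne_true, if_pos rfl,
        Submodule.mem_inf] at hu hv
      refine Submodule.IsOrtho.inner_eq ?_ hu.2 hv.2
      refine ortho_biSup ?_
      intro k hk k' hk'
      rw [Finset.mem_Icc] at hk hk'
      refine EW_ortho S W ?_
      have : k ≠ k' := by omega
      exact_mod_cast this
    · intro u hu v hv
      simp only [QPolyDRG.Wsplit, if_neg Bool.false_ne_true, if_pos rfl,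
        Submodule.mem_inf] at hu hv
      refine Submodule.IsOrtho.inner_eq ?_ hu.2 hv.2
      refine ortho_biSup ?_
      intro k hk k' hk'
      rw [Finset.mem_Icc] at hk hk'
      refine EW_ortho S W ?_
      have : k ≠ k' := by omega
      exact_mod_cast this


end
end

section
/- With the Q-polynomial distance-regular graph setup and the split subspaces Ṽ^{μν}_{i,j}, for each μ, ν ∈ {↓,↑} one has V = Σ_{i=0}^D Σ_{j=0}^D Ṽ^{μν}_{i,j} as a direct sum (the (μ,ν)-split decomposition of V with respect to x). -/
noncomputable section

open Matrix Finset
open scoped ComplexInnerProductSpace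

section SplitAbstract

open Module
open scoped DirectSum

lemma inf_inf_eq_of_le {α : Type*} [Lattice α] {a b c d : α} (hac : a ≤ c) (hdb : d ≤ b) :
    (a ⊓ b) ⊓ (c ⊓ d) = a ⊓ d :=
  le_antisymm
    (le_inf (inf_le_left.trans inf_le_left) (inf_le_right.trans inf_le_right))
    (le_inf (le_inf inf_le_left (inf_le_right.trans hdb))
      (le_inf (inf_le_left.trans hac) inf_le_right))

variable {E : Type*} [NormedAddCommGroup E] [InnerProductSpace ℂ E] [FiniteDimensional ℂ E]

lemma split_decomp_abstract (D : ℕ) (U W : ℕ → Submodule ℂ E)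
    (hU : Monotone U) (hW : Monotone W) (hUD : U D = ⊤) (hWD : W D = ⊤)
    (V : ℤ → ℤ → Submodule ℂ E)
    (hV : ∀ i j : ℤ, 0 ≤ i → 0 ≤ j → V i j = U i.toNat ⊓ W j.toNat)
    (hVbot : ∀ i j : ℤ, ¬ (0 ≤ i ∧ 0 ≤ j) → V i j = ⊥)
    (T : ℕ → ℕ → Submodule ℂ E)
    (hT : ∀ i j : ℕ, T i j = V i j ⊓ (V ((i : ℤ) - 1) j ⊔ V i ((j : ℤ) - 1))ᗮ) :
    iSupIndep (fun p : Fin (D + 1) × Fin (D + 1) => T p.1 p.2) ∧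
      (⨆ p : Fin (D + 1) × Fin (D + 1), T p.1 p.2) = ⊤ := by
  -- monotonicity of V
  have Vmono : ∀ {i j i' j' : ℤ}, i ≤ i' → j ≤ j' → V i j ≤ V i' j' := by
    intro i j i' j' hii hjj
    by_cases h : 0 ≤ i ∧ 0 ≤ j
    · have h' : 0 ≤ i' ∧ 0 ≤ j' := ⟨h.1.trans hii, h.2.trans hjj⟩
      rw [hV i j h.1 h.2, hV i' j' h'.1 h'.2]
      exact inf_le_inf (hU (Int.toNat_le_toNat hii)) (hW (Int.toNat_le_toNat hjj))
    · rw [hVbot i j h]; exact bot_le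
  have hK : ∀ i j : ℕ, (V ((i : ℤ) - 1) j ⊔ V i ((j : ℤ) - 1)) ≤ V i j :=
    fun i j => sup_le (Vmono (by omega) le_rfl) (Vmono le_rfl (by omega))
  -- splitting
  have hsplit : ∀ i j : ℕ,
      V i j = (V ((i : ℤ) - 1) j ⊔ V i ((j : ℤ) - 1)) ⊔ T i j := by
    intro i j
    rw [hT i j, inf_comm]
    exact (Submodule.sup_orthogonal_inf_of_hasOrthogonalProjection (hK i j)).symm
  -- rank relation
  have hrank : ∀ i j : ℕ,
      finrank ℂ (T i j) + finrank ℂ (V ((i : ℤ) - 1) j) + finrank ℂ (V i ((j : ℤ) - 1))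
        = finrank ℂ (V i j) + finrank ℂ (V ((i : ℤ) - 1) ((j : ℤ) - 1)) := by
    intro i j
    have hdisj : (V ((i : ℤ) - 1) j ⊔ V i ((j : ℤ) - 1)) ⊓ T i j = ⊥ := by
      rw [hT i j]
      have h' : (V ((i : ℤ) - 1) j ⊔ V i ((j : ℤ) - 1)) ⊓
            (V i j ⊓ (V ((i : ℤ) - 1) j ⊔ V i ((j : ℤ) - 1))ᗮ)
          ≤ (V ((i : ℤ) - 1) j ⊔ V i ((j : ℤ) - 1)) ⊓
            (V ((i : ℤ) - 1) j ⊔ V i ((j : ℤ) - 1))ᗮ :=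
        inf_le_inf le_rfl inf_le_right
      rw [(Submodule.orthogonal_disjoint (V ((i : ℤ) - 1) j ⊔ V i ((j : ℤ) - 1))).eq_bot] at h'
      exact le_bot_iff.mp h'
    have h1 := Submodule.finrank_sup_add_finrank_inf_eq
      (V ((i : ℤ) - 1) j ⊔ V i ((j : ℤ) - 1)) (T i j)
    rw [← hsplit i j, hdisj, finrank_bot, add_zero] at h1
    have hinf : V ((i : ℤ) - 1) j ⊓ V i ((j : ℤ) - 1) = V ((i : ℤ) - 1) ((j : ℤ) - 1) := by
      by_cases hi : i = 0
      · subst hi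
        rw [hVbot (((0 : ℕ) : ℤ) - 1) ((j : ℤ)) (by omega),
          hVbot (((0 : ℕ) : ℤ) - 1) ((j : ℤ) - 1) (by omega), bot_inf_eq]
      · by_cases hj : j = 0
        · subst hj
          rw [hVbot ((i : ℤ)) (((0 : ℕ) : ℤ) - 1) (by omega),
            hVbot (((i : ℤ)) - 1) (((0 : ℕ) : ℤ) - 1) (by omega), inf_bot_eq]
        · have hi1 : (0 : ℤ) ≤ (i : ℤ) - 1 := by omega
          have hj1 : (0 : ℤ) ≤ (j : ℤ) - 1 := by omega
          rw [hV _ _ hi1 (by omega : (0:ℤ) ≤ (j : ℤ)), hV _ _ (by omega : (0:ℤ) ≤ (i : ℤ)) hj1,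
            hV _ _ hi1 hj1]
          exact inf_inf_eq_of_le (hU (Int.toNat_le_toNat (by omega)))
            (hW (Int.toNat_le_toNat (by omega)))
    have h2 := Submodule.finrank_sup_add_finrank_inf_eq (V ((i : ℤ) - 1) j) (V i ((j : ℤ) - 1))
    rw [hinf] at h2
    omega
  -- the big supremum
  set Sup := ⨆ p : Fin (D + 1) × Fin (D + 1), T p.1 p.2 with hSup
  have hTle : ∀ i j : ℕ, i ≤ D → j ≤ D → T i j ≤ Sup := by
    intro i j hi hj
    exact le_iSup (fun p : Fin (D + 1) × Fin (D + 1) => T p.1 p.2)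
      (⟨⟨i, by omega⟩, ⟨j, by omega⟩⟩ : Fin (D + 1) × Fin (D + 1))
  have key : ∀ n : ℕ, ∀ i j : ℕ, i + j = n → i ≤ D → j ≤ D → V i j ≤ Sup := by
    intro n
    induction n using Nat.strong_induction_on with
    | _ n ih =>
      intro i j hij hi hj
      rw [hsplit i j]
      refine sup_le (sup_le ?_ ?_) (hTle i j hi hj)
      · rcases Nat.eq_zero_or_pos i with h0 | h0
        · subst h0
          rw [hVbot _ _ (by omega)]
          exact bot_le
        · rw [show ((i : ℤ) - 1) = ((i - 1 : ℕ) : ℤ) by omega]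
          exact ih (i - 1 + j) (by omega) (i - 1) j rfl (by omega) hj
      · rcases Nat.eq_zero_or_pos j with h0 | h0
        · subst h0
          rw [hVbot _ _ (by omega)]
          exact bot_le
        · rw [show ((j : ℤ) - 1) = ((j - 1 : ℕ) : ℤ) by omega]
          exact ih (i + (j - 1)) (by omega) i (j - 1) rfl hi (by omega)
  have hVDD : V D D = ⊤ := by
    rw [hV _ _ (by omega) (by omega)]
    simp [hUD, hWD]
  have htop : Sup = ⊤ :=
    top_unique (hVDD ▸ key (D + D) D D rfl le_rfl le_rfl)
  -- dimension count
  set F : ℕ → ℕ → ℕ := fun i j => finrank ℂ (V ((i : ℤ) - 1) ((j : ℤ) - 1)) with hF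
  have hF0 : ∀ j, F 0 j = 0 := by
    intro j
    simp only [hF]
    rw [hVbot _ _ (by omega)]
    exact finrank_bot ℂ E
  have hFn0 : ∀ i, F i 0 = 0 := by
    intro i
    simp only [hF]
    rw [hVbot _ _ (by omega)]
    exact finrank_bot ℂ E
  have hrec : ∀ i j : ℕ,
      finrank ℂ (T i j) + F i (j + 1) + F (i + 1) j = F (i + 1) (j + 1) + F i j := by
    intro i j
    simp only [hF]
    rw [show (((i + 1 : ℕ) : ℤ) - 1) = (i : ℤ) by push_cast; ring,
      show (((j + 1 : ℕ) : ℤ) - 1) = (j : ℤ) by push_cast; ring]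
    exact hrank i j
  have hsum : ∑ i ∈ Finset.range (D + 1), ∑ j ∈ Finset.range (D + 1),
      finrank ℂ (T i j) = finrank ℂ E := by
    have hZ : ∑ i ∈ Finset.range (D + 1), ∑ j ∈ Finset.range (D + 1),
        (finrank ℂ (T i j) : ℤ) = (F (D + 1) (D + 1) : ℤ) := by
      have h1 : ∀ j : ℕ, ∑ i ∈ Finset.range (D + 1), (finrank ℂ (T i j) : ℤ)
          = (F (D + 1) (j + 1) : ℤ) - (F (D + 1) j : ℤ) := by
        intro j
        have heq : ∀ i ∈ Finset.range (D + 1), (finrank ℂ (T i j) : ℤ)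
            = ((F (i + 1) (j + 1) : ℤ) - (F (i + 1) j : ℤ))
              - ((F i (j + 1) : ℤ) - (F i j : ℤ)) := by
          intro i _
          have := hrec i j
          omega
        rw [Finset.sum_congr rfl heq,
          Finset.sum_range_sub (fun i => (F i (j + 1) : ℤ) - (F i j : ℤ))]
        rw [hF0 j, hF0 (j + 1)]
        push_cast
        ring
      calc ∑ i ∈ Finset.range (D + 1), ∑ j ∈ Finset.range (D + 1), (finrank ℂ (T i j) : ℤ)
          = ∑ j ∈ Finset.range (D + 1), ∑ i ∈ Finset.range (D + 1), (finrank ℂ (T i j) : ℤ) :=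
            Finset.sum_comm
        _ = ∑ j ∈ Finset.range (D + 1), ((F (D + 1) (j + 1) : ℤ) - (F (D + 1) j : ℤ)) :=
            Finset.sum_congr rfl (fun j _ => h1 j)
        _ = (F (D + 1) (D + 1) : ℤ) - (F (D + 1) 0 : ℤ) :=
            Finset.sum_range_sub (fun j => (F (D + 1) j : ℤ)) (D + 1)
        _ = (F (D + 1) (D + 1) : ℤ) := by rw [hFn0]; push_cast; ring
    have hFDD : F (D + 1) (D + 1) = finrank ℂ E := by
      simp only [hF]
      rw [show (((D + 1 : ℕ) : ℤ) - 1) = ((D : ℕ) : ℤ) by push_cast; ring, hVDD]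
      exact finrank_top ℂ E
    rw [hFDD] at hZ
    exact_mod_cast hZ
  -- independence via direct sum
  set A : Fin (D + 1) × Fin (D + 1) → Submodule ℂ E := fun p => T p.1 p.2 with hA
  haveI : Module.Finite ℂ (⨁ p, A p) :=
    Module.Finite.equiv (DirectSum.linearEquivFunOnFintype ℂ _ (fun p => ↥(A p))).symm
  have hAsum : ∑ p : Fin (D + 1) × Fin (D + 1), finrank ℂ (A p) = finrank ℂ E := by
    rw [Fintype.sum_prod_type]
    rw [Fin.sum_univ_eq_sum_range (fun i => ∑ b : Fin (D + 1), finrank ℂ (T i b))]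
    rw [← hsum]
    refine Finset.sum_congr rfl (fun i _ => ?_)
    exact Fin.sum_univ_eq_sum_range (fun j => finrank ℂ (T i j)) (D + 1)
  have hsurj : Function.Surjective (DirectSum.coeLinearMap A) := by
    rw [← LinearMap.range_eq_top, DirectSum.range_coeLinearMap]
    exact htop
  have hinj : Function.Injective (DirectSum.coeLinearMap A) := by
    rw [← LinearMap.ker_eq_bot]
    have hrn := LinearMap.finrank_range_add_finrank_ker (DirectSum.coeLinearMap A)
    rw [LinearMap.range_eq_top.mpr hsurj, finrank_top] at hrn
    have hdsum : finrank ℂ (⨁ p, A p) = finrank ℂ E := by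
      rw [Module.finrank_directSum]
      exact hAsum
    rw [hdsum] at hrn
    have : finrank ℂ (LinearMap.ker (DirectSum.coeLinearMap A)) = 0 := by omega
    rwa [Submodule.finrank_eq_zero] at this
  have hInternal : DirectSum.IsInternal A := ⟨hinj, hsurj⟩
  exact (DirectSum.isInternal_submodule_iff_iSupIndep_and_iSup_eq_top A).mp hInternal

end SplitAbstract

open QPolyDRG in
/-- The `(μ,ν)`-split decompositions of the standard module: for each `μ, ν ∈ {↓,↑}`,
`V = Σ_{i=0}^D Σ_{j=0}^D Ṽ^{μν}_{i,j}` is a direct sum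
(`μ = false` stands for `↓`, `μ = true` for `↑`, and similarly for `ν`). -/
theorem drg_split_decomposition {X : Type*} [Fintype X] [DecidableEq X]
    (S : QPolyDRG X) (x : X) :
    ∀ μ ν : Bool,
      iSupIndep (fun p : Fin (S.D + 1) × Fin (S.D + 1) => S.tildeV x μ ν p.1 p.2) ∧
      (⨆ p : Fin (S.D + 1) × Fin (S.D + 1), S.tildeV x μ ν p.1 p.2) = ⊤ := by
  classical
  -- the dual idempotents sum to the identity matrix
  have hEstar_sum : (∑ k ∈ Finset.range (S.D + 1), S.Estar x k) = 1 := by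
    ext y z
    rw [Matrix.sum_apply]
    by_cases h : y = z
    · subst h
      simp only [QPolyDRG.Estar, Matrix.diagonal_apply_eq, Matrix.one_apply_eq]
      rw [Finset.sum_ite_eq (Finset.range (S.D + 1)) (S.G.dist x y) (fun _ => (1 : ℂ))]
      simp [Nat.lt_succ_iff, S.dist_le]
    · simp [QPolyDRG.Estar, Matrix.diagonal_apply_ne _ h, Matrix.one_apply_ne h]
  -- a matrix family summing to 1 has ranges spanning everything
  have htopgen : ∀ M : ℕ → Matrix X X ℂ, (∑ k ∈ Finset.range (S.D + 1), M k) = 1 →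
      (⨆ k ∈ Finset.range (S.D + 1),
        LinearMap.range (Matrix.toEuclideanLin (M k))) = ⊤ := by
    intro M hM
    rw [eq_top_iff]
    intro v _
    have h1 : Matrix.toEuclideanLin (∑ k ∈ Finset.range (S.D + 1), M k)
        = ∑ k ∈ Finset.range (S.D + 1), Matrix.toEuclideanLin (M k) :=
      map_sum _ _ _
    rw [hM] at h1
    have h2 := congrArg (fun f : EuclideanSpace ℂ X →ₗ[ℂ] EuclideanSpace ℂ X => f v) h1
    simp only [LinearMap.sum_apply] at h2
    have h3 : Matrix.toEuclideanLin (1 : Matrix X X ℂ) v = v := by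
      simp [Matrix.toEuclideanLin_apply, Matrix.one_mulVec]
    have hv : v = ∑ k ∈ Finset.range (S.D + 1), Matrix.toEuclideanLin (M k) v := by
      rw [← h2]; exact h3.symm
    rw [hv]
    refine Submodule.sum_mem _ (fun k hk => ?_)
    exact Submodule.mem_iSup_of_mem k
      (Submodule.mem_iSup_of_mem hk (LinearMap.mem_range_self _ v))
  have hEstarV_eq : ∀ k : ℕ, k ≤ S.D →
      S.EstarV x (k : ℤ) = LinearMap.range (Matrix.toEuclideanLin (S.Estar x k)) := by
    intro k hk
    rw [QPolyDRG.EstarV, if_pos ⟨Int.natCast_nonneg k, by exact_mod_cast hk⟩]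
    simp
  have hEV_eq : ∀ k : ℕ, k ≤ S.D →
      S.EV (k : ℤ) = LinearMap.range (Matrix.toEuclideanLin (S.E k)) := by
    intro k hk
    rw [QPolyDRG.EV, if_pos ⟨Int.natCast_nonneg k, by exact_mod_cast hk⟩]
    simp
  have hEstarTop : (⨆ k ∈ Finset.range (S.D + 1), S.EstarV x (k : ℤ)) = ⊤ := by
    have heq : (⨆ k ∈ Finset.range (S.D + 1), S.EstarV x (k : ℤ))
        = ⨆ k ∈ Finset.range (S.D + 1),
            LinearMap.range (Matrix.toEuclideanLin (S.Estar x k)) := by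
      refine iSup_congr fun k => iSup_congr fun hk => ?_
      exact hEstarV_eq k (Nat.lt_succ_iff.mp (Finset.mem_range.mp hk))
    rw [heq]
    exact htopgen _ hEstar_sum
  have hETop : (⨆ k ∈ Finset.range (S.D + 1), S.EV (k : ℤ)) = ⊤ := by
    have heq : (⨆ k ∈ Finset.range (S.D + 1), S.EV (k : ℤ))
        = ⨆ k ∈ Finset.range (S.D + 1),
            LinearMap.range (Matrix.toEuclideanLin (S.E k)) := by
      refine iSup_congr fun k => iSup_congr fun hk => ?_
      exact hEV_eq k (Nat.lt_succ_iff.mp (Finset.mem_range.mp hk))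
    rw [heq]
    exact htopgen _ S.hEsum
  have hIcc : Finset.Icc (S.D - S.D) S.D = Finset.range (S.D + 1) := by
    ext k; simp [Nat.lt_succ_iff]
  -- the four families and their properties
  have hmono_range : ∀ f : ℤ → Submodule ℂ (EuclideanSpace ℂ X),
      Monotone (fun i : ℕ => ⨆ k ∈ Finset.range (i + 1), f (k : ℤ)) := by
    intro f a b hab
    exact biSup_mono fun k hk =>
      Finset.mem_range.mpr (lt_of_lt_of_le (Finset.mem_range.mp hk) (by omega))
  have hmono_Icc : ∀ f : ℤ → Submodule ℂ (EuclideanSpace ℂ X),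
      Monotone (fun i : ℕ => ⨆ k ∈ Finset.Icc (S.D - i) S.D, f (k : ℤ)) := by
    intro f a b hab
    exact biSup_mono fun k hk =>
      Finset.mem_Icc.mpr ⟨le_trans (Nat.sub_le_sub_left hab S.D)
        (Finset.mem_Icc.mp hk).1, (Finset.mem_Icc.mp hk).2⟩
  have hEstarIccTop : (⨆ k ∈ Finset.Icc (S.D - S.D) S.D, S.EstarV x (k : ℤ)) = ⊤ := by
    simp only [hIcc]; exact hEstarTop
  have hEIccTop : (⨆ k ∈ Finset.Icc (S.D - S.D) S.D, S.EV (k : ℤ)) = ⊤ := by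
    simp only [hIcc]; exact hETop
  intro μ ν
  cases μ <;> cases ν
  · exact split_decomp_abstract S.D
      (fun i => ⨆ k ∈ Finset.range (i + 1), S.EstarV x (k : ℤ))
      (fun j => ⨆ k ∈ Finset.range (j + 1), S.EV (k : ℤ))
      (hmono_range _) (hmono_range _) hEstarTop hETop
      (S.Vsplit x false false)
      (fun i j hi hj => by
        unfold QPolyDRG.Vsplit
        rw [if_pos (⟨hi, hj⟩ : 0 ≤ i ∧ 0 ≤ j)]; rfl)
      (fun i j h => by unfold QPolyDRG.Vsplit; rw [if_neg h])
      (S.tildeV x false false) (fun i j => rfl)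
  · exact split_decomp_abstract S.D
      (fun i => ⨆ k ∈ Finset.range (i + 1), S.EstarV x (k : ℤ))
      (fun j => ⨆ k ∈ Finset.Icc (S.D - j) S.D, S.EV (k : ℤ))
      (hmono_range _) (hmono_Icc _) hEstarTop hEIccTop
      (S.Vsplit x false true)
      (fun i j hi hj => by
        unfold QPolyDRG.Vsplit
        rw [if_pos (⟨hi, hj⟩ : 0 ≤ i ∧ 0 ≤ j)]; rfl)
      (fun i j h => by unfold QPolyDRG.Vsplit; rw [if_neg h])
      (S.tildeV x false true) (fun i j => rfl)
  · exact split_decomp_abstract S.D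
      (fun i => ⨆ k ∈ Finset.Icc (S.D - i) S.D, S.EstarV x (k : ℤ))
      (fun j => ⨆ k ∈ Finset.range (j + 1), S.EV (k : ℤ))
      (hmono_Icc _) (hmono_range _) hEstarIccTop hETop
      (S.Vsplit x true false)
      (fun i j hi hj => by
        unfold QPolyDRG.Vsplit
        rw [if_pos (⟨hi, hj⟩ : 0 ≤ i ∧ 0 ≤ j)]; rfl)
      (fun i j h => by unfold QPolyDRG.Vsplit; rw [if_neg h])
      (S.tildeV x true false) (fun i j => rfl)
  · exact split_decomp_abstract S.D
      (fun i => ⨆ k ∈ Finset.Icc (S.D - i) S.D, S.EstarV x (k : ℤ))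
      (fun j => ⨆ k ∈ Finset.Icc (S.D - j) S.D, S.EV (k : ℤ))
      (hmono_Icc _) (hmono_Icc _) hEstarIccTop hEIccTop
      (S.Vsplit x true true)
      (fun i j hi hj => by
        unfold QPolyDRG.Vsplit
        rw [if_pos (⟨hi, hj⟩ : 0 ≤ i ∧ 0 ≤ j)]; rfl)
      (fun i j h => by unfold QPolyDRG.Vsplit; rw [if_neg h])
      (S.tildeV x true true) (fun i j => rfl)

end
end
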